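/- arXiv:2304.05092 — 4 statements merged into one kernel-verified Lean document; each statement's English description precedes it below -/
import Mathlib

section
/- Let H : ℝ² → ℝ satisfy: (C3) H is of class C³; (CNH) there exists X > 0 such that ∂ₓH(x,p) = 0 whenever |x| ≥ X; (CVX) for every x ∈ ℝ the map p ↦ ∂ₚH(x,p) is an increasing C¹-diffeomorphism of ℝ onto itself. Then H satisfies: (UC, uniform coercivity) for every h ∈ ℝ there exists U_h ∈ ℝ such that for all (x,u) ∈ ℝ², |H(x,u)| ≤ h implies |u| ≤ U_h; and (WGNL, weak genuine nonlinearity) for almost every x ∈ ℝ the set {w ∈ ℝ : ∂²H/∂w²(x,w) = 0} has empty interior. -/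
open Real Set MeasureTheory Filter Topology

noncomputable section

/-- Partial derivative of `H` in its first (space) variable. -/
def pdx (H : ℝ → ℝ → ℝ) (x p : ℝ) : ℝ := deriv (fun y => H y p) x

/-- Partial derivative of `H` in its second (momentum) variable. -/
def pdp (H : ℝ → ℝ → ℝ) (x p : ℝ) : ℝ := deriv (fun u => H x u) p

/-- (C3) Smoothness: `H ∈ C³(ℝ²; ℝ)`. -/
def CondC3 (H : ℝ → ℝ → ℝ) : Prop := ContDiff ℝ 3 (Function.uncurry H)

/-- (CNH) Compact non-homogeneity: `∂ₓ H (x,p) = 0` for `|x| ≥ X`. -/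
def CondCNH (H : ℝ → ℝ → ℝ) : Prop := ∃ X > (0:ℝ), ∀ x p : ℝ, X ≤ |x| → pdx H x p = 0

/-- (CVX) Strong convexity: for every `x`, `p ↦ ∂ₚ H (x,p)` is an increasing
`C¹`-diffeomorphism of `ℝ` onto itself. -/
def CondCVX (H : ℝ → ℝ → ℝ) : Prop :=
  ∀ x : ℝ, StrictMono (pdp H x) ∧ Function.Bijective (pdp H x) ∧
    ContDiff ℝ 1 (pdp H x) ∧ ContDiff ℝ 1 (Function.invFun (pdp H x))

/-- Proposition 2.6: (C3), (CNH), (CVX) imply uniform coercivity (UC) and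
weak genuine nonlinearity (WGNL). -/
theorem stmt_0 (H : ℝ → ℝ → ℝ) (hC3 : CondC3 H) (hCNH : CondCNH H) (hCVX : CondCVX H) :
    (∀ h : ℝ, ∃ Uh : ℝ, ∀ x u : ℝ, |H x u| ≤ h → |u| ≤ Uh) ∧
    (∀ᵐ x ∂(volume : Measure ℝ),
      interior {w : ℝ | deriv (pdp H x) w = 0} = (∅ : Set ℝ)) := by
  constructor
  · -- Part 1: uniform coercivity
      obtain ⟨X, hX0, hXz⟩ := hCNH
      have hdiffp : ∀ x : ℝ, Differentiable ℝ (fun u => H x u) := by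
        intro x
        have : ContDiff ℝ 3 (fun u : ℝ => H x u) :=
          hC3.comp ((contDiff_const (c := x)).prodMk contDiff_id)
        exact this.differentiable (by norm_num)
      have hdiffx : ∀ p : ℝ, Differentiable ℝ (fun y => H y p) := by
        intro p
        have : ContDiff ℝ 3 (fun y : ℝ => H y p) :=
          hC3.comp (contDiff_id.prodMk (contDiff_const (c := p)))
        exact this.differentiable (by norm_num)
      have hconv : ∀ x : ℝ, ConvexOn ℝ Set.univ (fun u => H x u) := fun x =>
        Monotone.convexOn_univ_of_deriv (hdiffp x) ((hCVX x).1.monotone)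
      have hcx : ∀ c : ℝ, Continuous (fun x => H x c) := fun c =>
        hC3.continuous.comp (continuous_id.prodMk continuous_const)
      -- linear growth on the right
      have hlow : ∀ x q : ℝ, pdp H x q = 1 → ∀ a b : ℝ, q ≤ a → a ≤ b →
          b - a ≤ H x b - H x a := by
        intro x q hq a b ha hab
        have hg : MonotoneOn (fun u => H x u - u) (Set.Ici q) := by
          apply monotoneOn_of_deriv_nonneg (convex_Ici q)
            (((hdiffp x).sub differentiable_fun_id).continuous.continuousOn)
            (((hdiffp x).sub differentiable_fun_id).differentiableOn)
          intro y hy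
          rw [interior_Ici] at hy
          have hd : deriv (fun u => H x u - u) y = pdp H x y - 1 := by
            rw [deriv_fun_sub ((hdiffp x) y) differentiableAt_fun_id, deriv_id'']
            rfl
          rw [show ((fun u => H x u) - fun x => x) = (fun u => H x u - u) from rfl, hd, sub_nonneg, ← hq]
          exact ((hCVX x).1 hy).le
        have := hg (Set.mem_Ici.2 ha) (Set.mem_Ici.2 (ha.trans hab)) hab
        simp only at this
        linarith
      -- linear growth on the left
      have hlow' : ∀ x q : ℝ, pdp H x q = -1 → ∀ a b : ℝ, b ≤ q → a ≤ b →
          b - a ≤ H x a - H x b := by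
        intro x q hq a b hb hab
        have hg : AntitoneOn (fun u => H x u + u) (Set.Iic q) := by
          apply antitoneOn_of_deriv_nonpos (convex_Iic q)
            (((hdiffp x).add differentiable_fun_id).continuous.continuousOn)
            (((hdiffp x).add differentiable_fun_id).differentiableOn)
          intro y hy
          rw [interior_Iic] at hy
          have hd : deriv (fun u => H x u + u) y = pdp H x y + 1 := by
            rw [deriv_fun_add ((hdiffp x) y) differentiableAt_fun_id, deriv_id'']
            rfl
          rw [show ((fun u => H x u) + fun x => x) = (fun u => H x u + u) from rfl, hd]
          have := ((hCVX x).1 hy).le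
          rw [hq] at this
          linarith
        have := hg (Set.mem_Iic.2 (hab.trans hb)) (Set.mem_Iic.2 hb) hab
        simp only at this
        linarith
      -- clamping in x
      have hconstR : ∀ u a b : ℝ, X ≤ a → a ≤ b → H a u = H b u := by
        intro u a b ha hab
        have key : ∀ y ∈ interior (Set.Icc a b), deriv (fun y => H y u) y = 0 := by
          intro y hy
          rw [interior_Icc] at hy
          exact hXz y u (le_trans (le_trans ha hy.1.le) (le_abs_self y))
        have hmono : MonotoneOn (fun y => H y u) (Set.Icc a b) :=
          monotoneOn_of_deriv_nonneg (convex_Icc a b) (hdiffx u).continuous.continuousOn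
            (hdiffx u).differentiableOn (fun y hy => (key y hy).ge)
        have hanti : AntitoneOn (fun y => H y u) (Set.Icc a b) :=
          antitoneOn_of_deriv_nonpos (convex_Icc a b) (hdiffx u).continuous.continuousOn
            (hdiffx u).differentiableOn (fun y hy => (key y hy).le)
        exact le_antisymm (hmono (Set.left_mem_Icc.2 hab) (Set.right_mem_Icc.2 hab) hab)
          (hanti (Set.left_mem_Icc.2 hab) (Set.right_mem_Icc.2 hab) hab)
      have hconstL : ∀ u a b : ℝ, b ≤ -X → a ≤ b → H a u = H b u := by
        intro u a b hb hab
        have key : ∀ y ∈ interior (Set.Icc a b), deriv (fun y => H y u) y = 0 := by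
          intro y hy
          rw [interior_Icc] at hy
          refine hXz y u ?_
          have : X ≤ -y := by linarith [hy.2]
          exact this.trans (neg_le_abs y)
        have hmono : MonotoneOn (fun y => H y u) (Set.Icc a b) :=
          monotoneOn_of_deriv_nonneg (convex_Icc a b) (hdiffx u).continuous.continuousOn
            (hdiffx u).differentiableOn (fun y hy => (key y hy).ge)
        have hanti : AntitoneOn (fun y => H y u) (Set.Icc a b) :=
          antitoneOn_of_deriv_nonpos (convex_Icc a b) (hdiffx u).continuous.continuousOn
            (hdiffx u).differentiableOn (fun y hy => (key y hy).le)
        exact le_antisymm (hmono (Set.left_mem_Icc.2 hab) (Set.right_mem_Icc.2 hab) hab)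
          (hanti (Set.left_mem_Icc.2 hab) (Set.right_mem_Icc.2 hab) hab)
      have hclamp : ∀ x u : ℝ, H x u = H (max (-X) (min X x)) u := by
        intro x u
        rcases le_total x (-X) with h1 | h1
        · have e1 : min X x = x := min_eq_right (by linarith)
          rw [e1, max_eq_left h1]
          exact hconstL u x (-X) le_rfl h1
        · rcases le_total X x with h2 | h2
          · have e1 : min X x = X := min_eq_left h2
            rw [e1, max_eq_right (by linarith)]
            exact (hconstR u X x le_rfl h2).symm
          · rw [min_eq_right h2, max_eq_right h1]
      intro h
      -- the open sets
      set U : ℕ → Set ℝ := fun n =>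
        {x : ℝ | 1/2 < H x n - H x ((n:ℝ)-1) ∧ h < H x n ∧
          1/2 < H x (-(n:ℝ)) - H x (-((n:ℝ)-1)) ∧ h < H x (-(n:ℝ))} with hUdef
      have hopen : ∀ n : ℕ, IsOpen (U n) := by
        intro n
        exact ((isOpen_lt continuous_const ((hcx _).sub (hcx _))).inter
          ((isOpen_lt continuous_const (hcx _)).inter
            ((isOpen_lt continuous_const ((hcx _).sub (hcx _))).inter
              (isOpen_lt continuous_const (hcx _)))))
      -- general adjacent-slope fact
      have hslope : ∀ x a b c : ℝ, a < b → b < c →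
          (H x b - H x a) / (b - a) ≤ (H x c - H x b) / (c - b) := fun x a b c h1 h2 =>
        (hconv x).slope_mono_adjacent (Set.mem_univ a) (Set.mem_univ c) h1 h2
      have hmonoU : Monotone U := by
        apply monotone_nat_of_le_succ
        intro n x hx
        obtain ⟨hA, hB, hC, hD⟩ := hx
        have c1 : ((n+1:ℕ):ℝ) = (n:ℝ)+1 := by push_cast; ring
        have s1 := hslope x ((n:ℝ)-1) n ((n:ℝ)+1) (by linarith) (by linarith)
        rw [show (n:ℝ) - ((n:ℝ)-1) = 1 by ring, show (n:ℝ)+1-(n:ℝ) = 1 by ring,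
          div_one, div_one] at s1
        have s2 := hslope x (-((n:ℝ)+1)) (-(n:ℝ)) (-((n:ℝ)-1)) (by linarith) (by linarith)
        rw [show -(n:ℝ) - (-((n:ℝ)+1)) = 1 by ring, show -((n:ℝ)-1) - (-(n:ℝ)) = 1 by ring,
          div_one, div_one] at s2
        refine ⟨?_, ?_, ?_, ?_⟩ <;> rw [c1]
        · rw [show (n:ℝ)+1-1 = (n:ℝ) by ring]; linarith
        · linarith
        · rw [show (n:ℝ)+1-1 = (n:ℝ) by ring]; linarith
        · linarith
      -- every x belongs to some U n
      have hcoverAll : ∀ x : ℝ, ∃ n : ℕ, x ∈ U n := by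
        intro x
        obtain ⟨q, hq⟩ := (hCVX x).2.1.2 1
        obtain ⟨q', hq'⟩ := (hCVX x).2.1.2 (-1)
        obtain ⟨n, hn⟩ := exists_nat_ge
          (max (max (q+2) (2 - q')) (max (h - (H x q - q) + 1) (h - (H x q' + q') + 1)))
        have h1 : q + 2 ≤ (n:ℝ) := le_trans (le_trans (le_max_left _ _) (le_max_left _ _)) hn
        have h2 : 2 - q' ≤ (n:ℝ) := le_trans (le_trans (le_max_right _ _) (le_max_left _ _)) hn
        have h3 : h - (H x q - q) + 1 ≤ (n:ℝ) :=
          le_trans (le_trans (le_max_left _ _) (le_max_right _ _)) hn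
        have h4 : h - (H x q' + q') + 1 ≤ (n:ℝ) :=
          le_trans (le_trans (le_max_right _ _) (le_max_right _ _)) hn
        refine ⟨n, ?_, ?_, ?_, ?_⟩
        · have := hlow x q hq ((n:ℝ)-1) n (by linarith) (by linarith)
          linarith
        · have := hlow x q hq q n le_rfl (by linarith)
          linarith
        · have := hlow' x q' hq' (-(n:ℝ)) (-((n:ℝ)-1)) (by linarith) (by linarith)
          linarith
        · have := hlow' x q' hq' (-(n:ℝ)) q' le_rfl (by linarith)
          linarith
      -- U n forces largeness of H
      have hgrow : ∀ (n : ℕ) (x u : ℝ), x ∈ U n → (n:ℝ) ≤ |u| → h < H x u := by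
        intro n x u hx hu
        obtain ⟨hA, hB, hC, hD⟩ := hx
        rcases le_abs.1 hu with h1 | h1
        · rcases eq_or_lt_of_le h1 with rfl | h1
          · exact hB
          · have s := hslope x ((n:ℝ)-1) n u (by linarith) h1
            rw [show (n:ℝ) - ((n:ℝ)-1) = 1 by ring, div_one] at s
            have hpos : 0 < (H x u - H x n) / (u - (n:ℝ)) := by linarith
            rcases div_pos_iff.1 hpos with ⟨ha, _⟩ | ⟨_, hb⟩
            · linarith
            · linarith
        · have h1' : u ≤ -(n:ℝ) := by linarith
          rcases eq_or_lt_of_le h1' with rfl | h1'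
          · exact hD
          · have s := hslope x u (-(n:ℝ)) (-((n:ℝ)-1)) h1' (by linarith)
            rw [show -((n:ℝ)-1) - (-(n:ℝ)) = 1 by ring, div_one] at s
            have hneg : (H x (-(n:ℝ)) - H x u) / (-(n:ℝ) - u) < 0 := by linarith
            rcases div_neg_iff.1 hneg with ⟨_, hb⟩ | ⟨ha, _⟩
            · linarith
            · linarith
      -- compactness
      obtain ⟨t, ht⟩ := (isCompact_Icc (a := -X) (b := X)).elim_finite_subcover U hopen
        (fun x _ => Set.mem_iUnion.2 (hcoverAll x))
      set N := t.sup id with hN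
      refine ⟨(N:ℝ), fun x u hu => ?_⟩
      set x' := max (-X) (min X x) with hx'
      have hx'K : x' ∈ Set.Icc (-X) X := by
        constructor
        · exact le_max_left _ _
        · exact max_le (by linarith) (min_le_left _ _)
      obtain ⟨i, hit, hxi⟩ := Set.mem_iUnion₂.1 (ht hx'K)
      have hxN : x' ∈ U N := hmonoU (Finset.le_sup (f := id) hit) hxi
      by_contra hcon
      push_neg at hcon
      have hbig := hgrow N x' u hxN hcon.le
      rw [← hclamp x u] at hbig
      have := le_trans (le_abs_self _) hu
      linarith
  · -- Part 2: weak genuine nonlinearity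
      refine ae_of_all _ (fun x => ?_)
      by_contra hne
      obtain ⟨w, hw⟩ := Set.nonempty_iff_ne_empty.2 hne
      obtain ⟨r, hr, hball⟩ := Metric.isOpen_iff.1 isOpen_interior w hw
      set f := pdp H x with hf
      have hdf : Differentiable ℝ f := (hCVX x).2.2.1.differentiable one_ne_zero
      have hsub : Set.Icc (w - r/2) (w + r/2) ⊆ Metric.ball w r := by
        intro y hy
        simp only [Metric.mem_ball, Real.dist_eq]
        rw [abs_sub_lt_iff]
        constructor <;> [linarith [hy.2]; linarith [hy.1]]
      have hz : ∀ y ∈ interior (Set.Icc (w - r/2) (w + r/2)), deriv f y = 0 := by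
        intro y hy
        have : y ∈ {w : ℝ | deriv (pdp H x) w = 0} :=
          interior_subset (hball (hsub (interior_subset hy)))
        exact this
      have hmono : MonotoneOn f (Set.Icc (w - r/2) (w + r/2)) :=
        monotoneOn_of_deriv_nonneg (convex_Icc _ _) hdf.continuous.continuousOn
          hdf.differentiableOn (fun y hy => (hz y hy).ge)
      have hanti : AntitoneOn f (Set.Icc (w - r/2) (w + r/2)) :=
        antitoneOn_of_deriv_nonpos (convex_Icc _ _) hdf.continuous.continuousOn
          hdf.differentiableOn (fun y hy => (hz y hy).le)
      have hab : w - r/2 < w + r/2 := by linarith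
      have h1 : w - r/2 ∈ Set.Icc (w - r/2) (w + r/2) := by constructor <;> linarith
      have h2 : w + r/2 ∈ Set.Icc (w - r/2) (w + r/2) := by constructor <;> linarith
      have := (hCVX x).1 hab
      have e1 := hmono h1 h2 hab.le
      have e2 := hanti h1 h2 hab.le
      have : f (w - r/2) = f (w + r/2) := le_antisymm e1 e2
      exact absurd this ((hCVX x).1 hab).ne
end
end

section
/- Let H satisfy (C3), (CNH) and (CVX). Then there exists a unique function z : ℝ → ℝ such that ∂ₚH(x, z(x)) = 0 for all x ∈ ℝ. Moreover z is of class C², z′(x) = 0 whenever |x| ≥ X, and consequently z attains a minimum and a maximum over ℝ, and the map x ↦ H(x, z(x)) attains a maximum K over ℝ. -/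
open Real Set MeasureTheory Filter Topology

noncomputable section

section AuxStmt2

variable {H : ℝ → ℝ → ℝ} {X : ℝ}

lemma hasDerivAt_slice_p (hC3 : CondC3 H) (x p : ℝ) :
    HasDerivAt (fun u => H x u) (fderiv ℝ (Function.uncurry H) (x, p) (0, 1)) p := by
  have h1 : HasFDerivAt (Function.uncurry H) (fderiv ℝ (Function.uncurry H) (x, p)) (x, p) :=
    ((hC3.differentiable (by norm_num)) (x, p)).hasFDerivAt
  have h2 : HasDerivAt (fun u : ℝ => ((x, u) : ℝ × ℝ)) (0, 1) p :=
    (hasDerivAt_const p x).prodMk (hasDerivAt_id p)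
  exact h1.comp_hasDerivAt p h2

lemma pdp_eq (hC3 : CondC3 H) (x p : ℝ) :
    pdp H x p = fderiv ℝ (Function.uncurry H) (x, p) (0, 1) :=
  (hasDerivAt_slice_p hC3 x p).deriv

lemma contDiff_F (hC3 : CondC3 H) : ContDiff ℝ 2 (fun q : ℝ × ℝ => pdp H q.1 q.2) := by
  have h1 : ContDiff ℝ 2 (fderiv ℝ (Function.uncurry H)) := hC3.fderiv_right (by norm_num)
  have h2 := (ContinuousLinearMap.apply ℝ ℝ (((0:ℝ), (1:ℝ)) : ℝ × ℝ)).contDiff.comp h1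
  have : (fun q : ℝ × ℝ => pdp H q.1 q.2)
      = fun q => fderiv ℝ (Function.uncurry H) q (0, 1) := by
    funext q; exact pdp_eq hC3 q.1 q.2
  rw [this]; exact h2

lemma deriv_pdp_ne (hCVX : CondCVX H) (x p : ℝ) : deriv (pdp H x) p ≠ 0 := by
  obtain ⟨hmono, hbij, hf, hg⟩ := hCVX x
  have hli : Function.LeftInverse (Function.invFun (pdp H x)) (pdp H x) :=
    Function.leftInverse_invFun hbij.1
  have h1 : HasDerivAt (pdp H x) (deriv (pdp H x) p) p :=
    ((hf.differentiable one_ne_zero) p).hasDerivAt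
  have h2 : HasDerivAt (Function.invFun (pdp H x))
      (deriv (Function.invFun (pdp H x)) (pdp H x p)) (pdp H x p) :=
    ((hg.differentiable one_ne_zero) _).hasDerivAt
  have h3 := h2.comp p h1
  rw [hli.comp_eq_id] at h3
  have h4 := h3.unique (hasDerivAt_id p)
  exact right_ne_zero_of_mul_eq_one h4

lemma z_contDiffAt (hC3 : CondC3 H) (hCVX : CondCVX H) {z : ℝ → ℝ}
    (hz : ∀ x, pdp H x (z x) = 0) (x₀ : ℝ) : ContDiffAt ℝ 2 z x₀ := by
  set F : ℝ × ℝ → ℝ := fun q => pdp H q.1 q.2 with hFdef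
  have hF : ContDiff ℝ 2 F := contDiff_F hC3
  set G : ℝ × ℝ → ℝ × ℝ := fun q => (q.1, F q) with hGdef
  have hG : ContDiff ℝ 2 G := contDiff_fst.prodMk hF
  set q₀ : ℝ × ℝ := (x₀, z x₀) with hq₀
  set L : ℝ × ℝ →L[ℝ] ℝ := fderiv ℝ F q₀ with hL
  set a : ℝ := L (1, 0) with ha
  set b : ℝ := L (0, 1) with hbdef
  have hLq : ∀ q : ℝ × ℝ, L q = a * q.1 + b * q.2 := by
    intro q
    have hq : q = q.1 • ((1:ℝ), (0:ℝ)) + q.2 • ((0:ℝ), (1:ℝ)) := by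
      simp [Prod.ext_iff]
    calc L q = L (q.1 • ((1:ℝ), (0:ℝ)) + q.2 • ((0:ℝ), (1:ℝ))) := by rw [← hq]
    _ = a * q.1 + b * q.2 := by
        rw [map_add, L.map_smul, L.map_smul]; simp [smul_eq_mul, ← ha, ← hbdef]; ring
  have hb : b ≠ 0 := by
    have hd : HasDerivAt (fun u => F (x₀, u)) b (z x₀) := by
      have h1 : HasFDerivAt F L q₀ := (hF.differentiable (by norm_num) q₀).hasFDerivAt
      have h2 : HasDerivAt (fun u : ℝ => ((x₀, u) : ℝ × ℝ)) (0, 1) (z x₀) :=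
        (hasDerivAt_const _ _).prodMk (hasDerivAt_id _)
      exact h1.comp_hasDerivAt _ h2
    have : deriv (pdp H x₀) (z x₀) = b := hd.deriv
    rw [← this]; exact deriv_pdp_ne hCVX x₀ (z x₀)
  set A : ℝ × ℝ →L[ℝ] ℝ × ℝ := (ContinuousLinearMap.fst ℝ ℝ ℝ).prod L with hA
  set B : ℝ × ℝ →L[ℝ] ℝ × ℝ := (ContinuousLinearMap.fst ℝ ℝ ℝ).prod
    (b⁻¹ • (ContinuousLinearMap.snd ℝ ℝ ℝ - a • ContinuousLinearMap.fst ℝ ℝ ℝ)) with hB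
  have hBA : Function.LeftInverse B A := by
    intro q
    have : A q = (q.1, a * q.1 + b * q.2) := by
      simp [hA, ContinuousLinearMap.prod_apply, hLq q]
    rw [this]
    simp only [hB, ContinuousLinearMap.prod_apply, ContinuousLinearMap.smul_apply,
      ContinuousLinearMap.sub_apply, ContinuousLinearMap.coe_fst', ContinuousLinearMap.coe_snd',
      smul_eq_mul]
    ext
    · simp
    · simp; field_simp
  have hAB : Function.RightInverse B A := by
    intro q
    have h1 : B q = (q.1, b⁻¹ * (q.2 - a * q.1)) := by
      simp [hB, ContinuousLinearMap.prod_apply, smul_eq_mul]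
    rw [h1]
    have h2 : A (q.1, b⁻¹ * (q.2 - a * q.1)) = (q.1, a * q.1 + b * (b⁻¹ * (q.2 - a * q.1))) := by
      simp [hA, ContinuousLinearMap.prod_apply, hLq]
    rw [h2]
    ext
    · simp
    · simp; field_simp; ring
  set e : (ℝ × ℝ) ≃L[ℝ] (ℝ × ℝ) := ContinuousLinearEquiv.equivOfInverse A B hBA hAB with he
  have hGA : HasFDerivAt G (e : ℝ × ℝ →L[ℝ] ℝ × ℝ) q₀ := by
    have : HasFDerivAt G A q₀ :=
      (hasFDerivAt_fst).prodMk (hF.differentiable (by norm_num) q₀).hasFDerivAt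
    exact this
  have hn : (2 : WithTop ℕ∞) ≠ 0 := by norm_num
  have hcd : ContDiffAt ℝ 2 G q₀ := hG.contDiffAt
  have hgcd : ContDiffAt ℝ 2 (hcd.localInverse hGA hn) (G q₀) := hcd.to_localInverse hGA hn
  set g : ℝ × ℝ → ℝ × ℝ := hcd.localInverse hGA hn with hg
  have hGq₀ : G q₀ = (x₀, 0) := by
    simp only [hGdef, hFdef, hq₀]
    exact Prod.ext rfl (hz x₀)
  have hri : ∀ᶠ y in 𝓝 (G q₀), G (g y) = y :=
    (hcd.hasStrictFDerivAt' hGA hn).eventually_right_inverse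
  have hmap : Tendsto (fun x : ℝ => ((x, 0) : ℝ × ℝ)) (𝓝 x₀) (𝓝 (G q₀)) := by
    rw [hGq₀]
    exact (continuous_id.prodMk continuous_const).tendsto x₀
  have hev : ∀ᶠ x in 𝓝 x₀, G (g (x, 0)) = (x, 0) := hmap.eventually hri
  have heq : z =ᶠ[𝓝 x₀] fun x => (g (x, 0)).2 := by
    filter_upwards [hev] with x hx
    have h1 : (g (x, 0)).1 = x := congrArg Prod.fst hx
    have h2 : pdp H ((g (x, 0)).1) ((g (x, 0)).2) = 0 := congrArg Prod.snd hx
    rw [h1] at h2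
    exact (hCVX x).1.injective ((hz x).trans h2.symm)
  have hrhs : ContDiffAt ℝ 2 (fun x => (g (x, 0)).2) x₀ := by
    have h1 : ContDiffAt ℝ 2 (fun x : ℝ => ((x, 0) : ℝ × ℝ)) x₀ :=
      (contDiff_id.prodMk contDiff_const).contDiffAt
    have h2 : ContDiffAt ℝ 2 g ((x₀, 0) : ℝ × ℝ) := hGq₀ ▸ hgcd
    exact contDiff_snd.contDiffAt.comp _ (h2.comp x₀ h1)
  exact hrhs.congr_of_eventuallyEq heq

lemma diff_slice_x (hC3 : CondC3 H) (p : ℝ) : Differentiable ℝ (fun y => H y p) := by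
  have : ContDiff ℝ 3 (fun y : ℝ => H y p) :=
    hC3.comp ((contDiff_id (E := ℝ)).prodMk (contDiff_const (c := p)))
  exact this.differentiable (by norm_num)

lemma H_const_right (hC3 : CondC3 H)
    (hCNH : ∀ x p : ℝ, X ≤ |x| → pdx H x p = 0) (p x : ℝ) (hx : X ≤ x) :
    H x p = H X p := by
  have hd := diff_slice_x hC3 p
  have key := constant_of_has_deriv_right_zero (f := fun y => H y p) (a := X) (b := x)
    hd.continuous.continuousOn ?_
  · exact key x ⟨hx, le_rfl⟩
  · intro y hy
    have h0 : deriv (fun y => H y p) y = 0 := hCNH y p (le_trans hy.1 (le_abs_self y))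
    have := (hd y).hasDerivAt
    rw [h0] at this
    exact this.hasDerivWithinAt

lemma H_const_left (hC3 : CondC3 H)
    (hCNH : ∀ x p : ℝ, X ≤ |x| → pdx H x p = 0) (p x : ℝ) (hx : x ≤ -X) :
    H x p = H (-X) p := by
  have hd := diff_slice_x hC3 p
  have key := constant_of_has_deriv_right_zero (f := fun y => H y p) (a := x) (b := -X)
    hd.continuous.continuousOn ?_
  · exact (key (-X) ⟨hx, le_rfl⟩).symm
  · intro y hy
    have hyX : X ≤ |y| := by
      have : y ≤ -X := le_of_lt hy.2
      calc X ≤ -y := by linarith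
      _ ≤ |y| := neg_le_abs y
    have h0 : deriv (fun y => H y p) y = 0 := hCNH y p hyX
    have := (hd y).hasDerivAt
    rw [h0] at this
    exact this.hasDerivWithinAt

lemma pdp_const_right (hC3 : CondC3 H)
    (hCNH : ∀ x p : ℝ, X ≤ |x| → pdx H x p = 0) (x : ℝ) (hx : X ≤ x) :
    pdp H x = pdp H X := by
  funext p
  unfold pdp
  rw [show (fun u => H x u) = (fun u => H X u) from
    funext fun u => H_const_right hC3 hCNH u x hx]

lemma pdp_const_left (hC3 : CondC3 H)
    (hCNH : ∀ x p : ℝ, X ≤ |x| → pdx H x p = 0) (x : ℝ) (hx : x ≤ -X) :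
    pdp H x = pdp H (-X) := by
  funext p
  unfold pdp
  rw [show (fun u => H x u) = (fun u => H (-X) u) from
    funext fun u => H_const_left hC3 hCNH u x hx]

end AuxStmt2

/-- Lemma: there is a unique `z : ℝ → ℝ` with `∂ₚH(x, z(x)) = 0`; it is `C²`, has
vanishing derivative for `|x| ≥ X`, attains a minimum and a maximum, and
`x ↦ H(x, z(x))` attains a maximum. -/
theorem stmt_2 (H : ℝ → ℝ → ℝ) (hC3 : CondC3 H) (X : ℝ) (hX : 0 < X)
    (hCNH : ∀ x p : ℝ, X ≤ |x| → pdx H x p = 0) (hCVX : CondCVX H) :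
    (∃! z : ℝ → ℝ, ∀ x : ℝ, pdp H x (z x) = 0) ∧
    ∀ z : ℝ → ℝ, (∀ x : ℝ, pdp H x (z x) = 0) →
      ContDiff ℝ 2 z ∧ (∀ x : ℝ, X ≤ |x| → deriv z x = 0) ∧
      (∃ a : ℝ, ∀ x : ℝ, z a ≤ z x) ∧ (∃ b : ℝ, ∀ x : ℝ, z x ≤ z b) ∧
      (∃ c : ℝ, ∀ x : ℝ, H x (z x) ≤ H c (z c)) := by
  have hsurj : ∀ x, Function.Surjective (pdp H x) := fun x => (hCVX x).2.1.2
  have hinj : ∀ x, Function.Injective (pdp H x) := fun x => (hCVX x).2.1.1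
  constructor
  · refine ⟨fun x => Function.invFun (pdp H x) 0, fun x => Function.invFun_eq ((hsurj x) 0),
      fun y hy => funext fun x => hinj x ((hy x).trans (Function.invFun_eq ((hsurj x) 0)).symm)⟩
  intro z hz
  have hz2 : ContDiff ℝ 2 z := contDiff_iff_contDiffAt.2 (z_contDiffAt hC3 hCVX hz)
  have hzr : ∀ x, X ≤ x → z x = z X := by
    intro x hx
    apply hinj x
    rw [hz x, pdp_const_right hC3 hCNH x hx, hz X]
  have hzl : ∀ x, x ≤ -X → z x = z (-X) := by
    intro x hx
    apply hinj x
    rw [hz x, pdp_const_left hC3 hCNH x hx, hz (-X)]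
  have hderiv_gt : ∀ x, X < x → deriv z x = 0 := by
    intro x hx
    have hev : z =ᶠ[𝓝 x] fun _ => z X := by
      filter_upwards [isOpen_Ioi.mem_nhds hx] with y hy
      exact hzr y (le_of_lt hy)
    rw [hev.deriv_eq, deriv_const]
  have hderiv_lt : ∀ x, x < -X → deriv z x = 0 := by
    intro x hx
    have hev : z =ᶠ[𝓝 x] fun _ => z (-X) := by
      filter_upwards [isOpen_Iio.mem_nhds hx] with y hy
      exact hzl y (le_of_lt hy)
    rw [hev.deriv_eq, deriv_const]
  have hdc : Continuous (deriv z) := hz2.continuous_deriv (by norm_num)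
  have hderiv : ∀ x, X ≤ |x| → deriv z x = 0 := by
    intro x hx
    rcases le_abs.1 hx with h | h
    · rcases lt_or_eq_of_le h with h' | h'
      · exact hderiv_gt x h'
      · rw [← h']
        have t1 : Tendsto (deriv z) (𝓝[>] X) (𝓝 (deriv z X)) :=
          (hdc.tendsto X).mono_left nhdsWithin_le_nhds
        have t2 : Tendsto (deriv z) (𝓝[>] X) (𝓝 0) := by
          refine Tendsto.congr' ?_ tendsto_const_nhds
          exact eventually_nhdsWithin_of_forall fun y hy => (hderiv_gt y hy).symm
        exact tendsto_nhds_unique t1 t2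
    · have h' : x ≤ -X := by linarith
      rcases lt_or_eq_of_le h' with h'' | h''
      · exact hderiv_lt x h''
      · rw [h'']
        have t1 : Tendsto (deriv z) (𝓝[<] (-X)) (𝓝 (deriv z (-X))) :=
          (hdc.tendsto (-X)).mono_left nhdsWithin_le_nhds
        have t2 : Tendsto (deriv z) (𝓝[<] (-X)) (𝓝 0) := by
          refine Tendsto.congr' ?_ tendsto_const_nhds
          exact eventually_nhdsWithin_of_forall fun y hy => (hderiv_lt y hy).symm
        exact tendsto_nhds_unique t1 t2
  have hzc : Continuous z := hz2.continuous
  have hne : (Icc (-X) X).Nonempty := ⟨X, by constructor <;> linarith⟩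
  have hXmem : X ∈ Icc (-X) X := ⟨by linarith, le_rfl⟩
  have hXmem' : -X ∈ Icc (-X) X := ⟨le_rfl, by linarith⟩
  refine ⟨hz2, hderiv, ?_, ?_, ?_⟩
  · obtain ⟨a, haI, ha⟩ := isCompact_Icc.exists_isMinOn hne hzc.continuousOn
    refine ⟨a, fun x => ?_⟩
    rcases le_total x X with h1 | h1
    · rcases le_total (-X) x with h2 | h2
      · exact ha ⟨h2, h1⟩
      · rw [hzl x h2]; exact ha hXmem'
    · rw [hzr x h1]; exact ha hXmem
  · obtain ⟨b, hbI, hb⟩ := isCompact_Icc.exists_isMaxOn hne hzc.continuousOn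
    refine ⟨b, fun x => ?_⟩
    rcases le_total x X with h1 | h1
    · rcases le_total (-X) x with h2 | h2
      · exact hb ⟨h2, h1⟩
      · rw [hzl x h2]; exact hb hXmem'
    · rw [hzr x h1]; exact hb hXmem
  · have hHc : Continuous (fun x => H x (z x)) := by
      have : Continuous (fun x => Function.uncurry H (x, z x)) :=
        hC3.continuous.comp (continuous_id.prodMk hzc)
      exact this
    obtain ⟨c, hcI, hc⟩ := isCompact_Icc.exists_isMaxOn hne hHc.continuousOn
    refine ⟨c, fun x => ?_⟩
    rcases le_total x X with h1 | h1
    · rcases le_total (-X) x with h2 | h2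
      · exact hc ⟨h2, h1⟩
      · calc H x (z x) = H x (z (-X)) := by rw [hzl x h2]
        _ = H (-X) (z (-X)) := H_const_left hC3 hCNH (z (-X)) x h2
        _ ≤ H c (z c) := hc hXmem'
    · calc H x (z x) = H x (z X) := by rw [hzr x h1]
      _ = H X (z X) := H_const_right hC3 hCNH (z X) x h1
      _ ≤ H c (z c) := hc hXmem
end
end

section
/- Let H satisfy (C3), (CNH) and (CVX), let z and K be as above, and let m, M : ℝ × (K,+∞) → ℝ be the unique functions with H(x,m(x,c)) = c, m(x,c) < z(x) and H(x,M(x,c)) = c, M(x,c) > z(x). Define v(c) = sup_{x∈ℝ} ∂ₚH(x, m(x,c)) and V(c) = inf_{x∈ℝ} ∂ₚH(x, M(x,c)) for c > K. Then: (i) v is nonincreasing and V is nondecreasing on (K,+∞); (ii) v(c) → −∞ and V(c) → +∞ as c → +∞. -/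
open Real Set MeasureTheory Filter Topology

noncomputable section

/-! ### Auxiliary lemmas -/

lemma diff_snd {H : ℝ → ℝ → ℝ} (hC3 : CondC3 H) (x : ℝ) : Differentiable ℝ (fun u => H x u) := by
  have h : (fun u => H x u) = Function.uncurry H ∘ (fun u => ((x:ℝ), u)) := rfl
  rw [h]
  exact (hC3.differentiable (by norm_num)).comp ((differentiable_const x).prodMk differentiable_id)

lemma diff_fst {H : ℝ → ℝ → ℝ} (hC3 : CondC3 H) (p : ℝ) : Differentiable ℝ (fun y => H y p) := by
  have h : (fun y => H y p) = Function.uncurry H ∘ (fun y => (y, p)) := rfl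
  rw [h]
  exact (hC3.differentiable (by norm_num)).comp (differentiable_id.prodMk (differentiable_const p))

lemma hasDerivAt_pdp {H : ℝ → ℝ → ℝ} (hC3 : CondC3 H) (x p : ℝ) :
    HasDerivAt (fun u => H x u) (pdp H x p) p := (diff_snd hC3 x p).hasDerivAt

lemma hasDerivAt_pdx {H : ℝ → ℝ → ℝ} (hC3 : CondC3 H) (x p : ℝ) :
    HasDerivAt (fun y => H y p) (pdx H x p) x := (diff_fst hC3 p x).hasDerivAt

lemma continuous_pdp {H : ℝ → ℝ → ℝ} (hC3 : CondC3 H) :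
    Continuous (fun q : ℝ × ℝ => pdp H q.1 q.2) := by
  have h1 : ∀ x p : ℝ, pdp H x p = fderiv ℝ (Function.uncurry H) (x, p) (0, 1) := by
    intro x p
    have hF : HasFDerivAt (Function.uncurry H) (fderiv ℝ (Function.uncurry H) (x,p)) (x,p) :=
      ((hC3.differentiable (by norm_num)) (x,p)).hasFDerivAt
    have hcurve : HasDerivAt (fun u : ℝ => ((x : ℝ), u)) ((0:ℝ), (1:ℝ)) p :=
      (hasDerivAt_const p x).prodMk (hasDerivAt_id p)
    have h2 := hF.comp_hasDerivAt p hcurve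
    exact (hasDerivAt_pdp hC3 x p).unique h2
  have h2 : (fun q : ℝ×ℝ => pdp H q.1 q.2) = fun q => fderiv ℝ (Function.uncurry H) q (0,1) := by
    funext q; exact h1 q.1 q.2
  rw [h2]
  exact (ContinuousLinearMap.apply ℝ ℝ ((0:ℝ),(1:ℝ))).continuous.comp
    (hC3.continuous_fderiv (by norm_num))

lemma const_right {H : ℝ → ℝ → ℝ} (hC3 : CondC3 H) {X : ℝ} (hX : 0 < X)
    (hCNH : ∀ x p : ℝ, X ≤ |x| → pdx H x p = 0) {x : ℝ} (hx : X ≤ x) (p : ℝ) :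
    H x p = H X p := by
  have h := constant_of_has_deriv_right_zero (f := fun y => H y p) (a := X) (b := x)
    ((diff_fst hC3 p).continuous.continuousOn) ?_ x ⟨hx, le_refl x⟩
  · exact h
  · intro y hy
    have hy1 : X ≤ |y| := le_trans hy.1 (le_abs_self y)
    have h0 : pdx H y p = 0 := hCNH y p hy1
    have hd := (hasDerivAt_pdx hC3 y p)
    rw [h0] at hd
    exact hd.hasDerivWithinAt

lemma const_left {H : ℝ → ℝ → ℝ} (hC3 : CondC3 H) {X : ℝ} (hX : 0 < X)
    (hCNH : ∀ x p : ℝ, X ≤ |x| → pdx H x p = 0) {x : ℝ} (hx : x ≤ -X) (p : ℝ) :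
    H x p = H (-X) p := by
  have h := constant_of_has_deriv_right_zero (f := fun y => H y p) (a := x) (b := -X)
    ((diff_fst hC3 p).continuous.continuousOn) ?_ (-X) ⟨hx, le_refl _⟩
  · exact h.symm
  · intro y hy
    have hy1 : X ≤ |y| := by
      rw [abs_of_neg (by nlinarith [hy.2] : y < 0)]
      linarith [hy.2.le]
    have h0 : pdx H y p = 0 := hCNH y p hy1
    have hd := (hasDerivAt_pdx hC3 y p)
    rw [h0] at hd
    exact hd.hasDerivWithinAt

lemma strictAntiOn_left {H : ℝ → ℝ → ℝ} (hC3 : CondC3 H) (hCVX : CondCVX H)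
    (z : ℝ → ℝ) (hz : ∀ x : ℝ, pdp H x (z x) = 0) (x : ℝ) :
    StrictAntiOn (fun u => H x u) (Iic (z x)) := by
  apply strictAntiOn_of_deriv_neg (convex_Iic _) ((diff_snd hC3 x).continuous.continuousOn)
  intro p hp
  rw [interior_Iic] at hp
  have h1 : deriv (fun u => H x u) p = pdp H x p := rfl
  rw [h1]
  have h2 := (hCVX x).1 (hp : p < z x)
  rwa [hz x] at h2

lemma strictMonoOn_right {H : ℝ → ℝ → ℝ} (hC3 : CondC3 H) (hCVX : CondCVX H)
    (z : ℝ → ℝ) (hz : ∀ x : ℝ, pdp H x (z x) = 0) (x : ℝ) :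
    StrictMonoOn (fun u => H x u) (Ici (z x)) := by
  apply strictMonoOn_of_deriv_pos (convex_Ici _) ((diff_snd hC3 x).continuous.continuousOn)
  intro p hp
  rw [interior_Ici] at hp
  have h1 : deriv (fun u => H x u) p = pdp H x p := rfl
  rw [h1]
  have h2 := (hCVX x).1 (hp : z x < p)
  rwa [hz x] at h2

lemma invp_spec {H : ℝ → ℝ → ℝ} (hCVX : CondCVX H) (x r : ℝ) :
    pdp H x (Function.invFun (pdp H x) r) = r :=
  Function.rightInverse_invFun (hCVX x).2.1.2 r

lemma bound_lemma {H : ℝ → ℝ → ℝ} (hC3 : CondC3 H) (hCVX : CondCVX H) {X : ℝ} (hX : 0 < X)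
    (hCNH : ∀ x p : ℝ, X ≤ |x| → pdx H x p = 0) (r : ℝ) :
    ∃ c₀ : ℝ, ∀ x : ℝ, H x (Function.invFun (pdp H x) r) ≤ c₀ := by
  obtain ⟨B, C, hBC⟩ : ∃ B C : ℝ, ∀ x ∈ Icc (-X) X, Function.invFun (pdp H x) r ∈ Icc B C := by
    refine IsCompact.induction_on (isCompact_Icc (a := -X) (b := X)) ⟨0, 0, by simp⟩ ?_ ?_ ?_
    · rintro s t hst ⟨B, C, h⟩
      exact ⟨B, C, fun x hx => h x (hst hx)⟩
    · rintro s t ⟨B, C, h⟩ ⟨B', C', h'⟩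
      refine ⟨min B B', max C C', ?_⟩
      rintro x (hx | hx)
      · exact ⟨le_trans (min_le_left _ _) (h x hx).1, le_trans (h x hx).2 (le_max_left _ _)⟩
      · exact ⟨le_trans (min_le_right _ _) (h' x hx).1, le_trans (h' x hx).2 (le_max_right _ _)⟩
    · intro x₀ _
      obtain ⟨pm, hpm⟩ := (hCVX x₀).2.1.2 (r - 1)
      obtain ⟨pp, hpp⟩ := (hCVX x₀).2.1.2 (r + 1)
      have c1 : Continuous fun x => pdp H x pm :=
        (continuous_pdp hC3).comp (continuous_id.prodMk continuous_const)
      have c2 : Continuous fun x => pdp H x pp :=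
        (continuous_pdp hC3).comp (continuous_id.prodMk continuous_const)
      have hUopen : IsOpen ({x : ℝ | pdp H x pm < r} ∩ {x : ℝ | r < pdp H x pp}) :=
        (isOpen_lt c1 continuous_const).inter (isOpen_lt continuous_const c2)
      have hx₀U : x₀ ∈ {x : ℝ | pdp H x pm < r} ∩ {x : ℝ | r < pdp H x pp} :=
        ⟨by simp only [mem_setOf_eq, hpm]; linarith, by simp only [mem_setOf_eq, hpp]; linarith⟩
      refine ⟨_, mem_nhdsWithin_of_mem_nhds (hUopen.mem_nhds hx₀U), pm, pp, ?_⟩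
      rintro x ⟨hx1, hx2⟩
      have h1 : pdp H x (Function.invFun (pdp H x) r) = r := invp_spec hCVX x r
      constructor
      · exact le_of_lt (((hCVX x).1.lt_iff_lt).mp (by rw [h1]; exact hx1))
      · exact le_of_lt (((hCVX x).1.lt_iff_lt).mp (by rw [h1]; exact hx2))
  obtain ⟨C₀, hC₀⟩ := (isCompact_Icc.prod isCompact_Icc :
      IsCompact (Icc (-X) X ×ˢ Icc B C)).exists_bound_of_continuousOn
    (hC3.continuous.continuousOn)
  refine ⟨max (max (H X (Function.invFun (pdp H X) r)) (H (-X) (Function.invFun (pdp H (-X)) r)))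
    C₀, fun x => ?_⟩
  rcases le_or_gt X x with hx | hx
  · have hfe : (fun u => H x u) = (fun u => H X u) := funext fun p => const_right hC3 hX hCNH hx p
    have hpdp : pdp H x = pdp H X := by unfold pdp; rw [hfe]
    have heq : H x (Function.invFun (pdp H x) r) = H X (Function.invFun (pdp H X) r) := by
      rw [hpdp]; exact congrFun hfe _
    rw [heq]
    exact le_max_of_le_left (le_max_left _ _)
  rcases le_or_gt x (-X) with hx' | hx'
  · have hfe : (fun u => H x u) = (fun u => H (-X) u) :=
      funext fun p => const_left hC3 hX hCNH hx' p
    have hpdp : pdp H x = pdp H (-X) := by unfold pdp; rw [hfe]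
    have heq : H x (Function.invFun (pdp H x) r) = H (-X) (Function.invFun (pdp H (-X)) r) := by
      rw [hpdp]; exact congrFun hfe _
    rw [heq]
    exact le_max_of_le_left (le_max_right _ _)
  · have hmem : x ∈ Icc (-X) X := ⟨hx'.le, hx.le⟩
    have h := hC₀ (x, Function.invFun (pdp H x) r) ⟨hmem, hBC x hmem⟩
    exact le_max_of_le_right (le_trans (le_abs_self _) h)

/-- Lemma: the extremal speeds `v(c) = sup_x ∂ₚH(x, m(x,c))` and
`V(c) = inf_x ∂ₚH(x, M(x,c))` are respectively nonincreasing and nondecreasing on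
`(K, +∞)`, with `v(c) → −∞` and `V(c) → +∞` as `c → +∞`. -/
theorem stmt_4 (H : ℝ → ℝ → ℝ) (hC3 : CondC3 H) (X : ℝ) (hX : 0 < X)
    (hCNH : ∀ x p : ℝ, X ≤ |x| → pdx H x p = 0) (hCVX : CondCVX H)
    (z : ℝ → ℝ) (hz : ∀ x : ℝ, pdp H x (z x) = 0)
    (K : ℝ) (hK : IsGreatest (Set.range fun x => H x (z x)) K)
    (m M : ℝ → ℝ → ℝ)
    (hm : ∀ x c : ℝ, K < c → H x (m x c) = c ∧ m x c < z x)
    (hM : ∀ x c : ℝ, K < c → H x (M x c) = c ∧ z x < M x c) :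
    (AntitoneOn (fun c => sSup {y : ℝ | ∃ x : ℝ, y = pdp H x (m x c)}) (Set.Ioi K) ∧
     MonotoneOn (fun c => sInf {y : ℝ | ∃ x : ℝ, y = pdp H x (M x c)}) (Set.Ioi K)) ∧
    (Tendsto (fun c => sSup {y : ℝ | ∃ x : ℝ, y = pdp H x (m x c)}) atTop atBot ∧
     Tendsto (fun c => sInf {y : ℝ | ∃ x : ℝ, y = pdp H x (M x c)}) atTop atTop) := by
  have hanti := strictAntiOn_left hC3 hCVX z hz
  have hmono := strictMonoOn_right hC3 hCVX z hz
  -- basic facts about the sets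
  have hSne : ∀ c : ℝ, ({y : ℝ | ∃ x : ℝ, y = pdp H x (m x c)}).Nonempty :=
    fun c => ⟨pdp H 0 (m 0 c), 0, rfl⟩
  have hTne : ∀ c : ℝ, ({y : ℝ | ∃ x : ℝ, y = pdp H x (M x c)}).Nonempty :=
    fun c => ⟨pdp H 0 (M 0 c), 0, rfl⟩
  have hSbdd : ∀ c : ℝ, K < c → BddAbove {y : ℝ | ∃ x : ℝ, y = pdp H x (m x c)} := by
    intro c hc
    refine ⟨0, ?_⟩
    rintro y ⟨x, rfl⟩
    have h1 := (hCVX x).1 (hm x c hc).2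
    rw [hz x] at h1
    exact h1.le
  have hTbdd : ∀ c : ℝ, K < c → BddBelow {y : ℝ | ∃ x : ℝ, y = pdp H x (M x c)} := by
    intro c hc
    refine ⟨0, ?_⟩
    rintro y ⟨x, rfl⟩
    have h1 := (hCVX x).1 (hM x c hc).2
    rw [hz x] at h1
    exact h1.le
  refine ⟨⟨?_, ?_⟩, ?_, ?_⟩
  · -- AntitoneOn
    intro c hc c' hc' hle
    refine csSup_le (hSne c') ?_
    rintro y ⟨x, rfl⟩
    have hmc := hm x c hc
    have hmc' := hm x c' hc'
    have hle2 : m x c' ≤ m x c := by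
      have := ((hanti x).le_iff_ge (mem_Iic.mpr hmc.2.le) (mem_Iic.mpr hmc'.2.le)).mp
        (by rw [hmc.1, hmc'.1]; exact hle)
      exact this
    exact le_trans ((hCVX x).1.monotone hle2) (le_csSup (hSbdd c hc) ⟨x, rfl⟩)
  · -- MonotoneOn
    intro c hc c' hc' hle
    refine le_csInf (hTne c') ?_
    rintro y ⟨x, rfl⟩
    have hMc := hM x c hc
    have hMc' := hM x c' hc'
    have hle2 : M x c ≤ M x c' := by
      exact ((hmono x).le_iff_le (mem_Ici.mpr hMc.2.le) (mem_Ici.mpr hMc'.2.le)).mp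
        (by rw [hMc.1, hMc'.1]; exact hle)
    exact le_trans (csInf_le (hTbdd c hc) ⟨x, rfl⟩) ((hCVX x).1.monotone hle2)
  · -- Tendsto atBot
    rw [tendsto_atBot]
    intro b
    obtain ⟨c₀, hc₀⟩ := bound_lemma hC3 hCVX hX hCNH (min b (-1))
    filter_upwards [eventually_ge_atTop (max c₀ (K+1))] with c hc
    have hcK : K < c := lt_of_lt_of_le (by linarith [le_max_right c₀ (K+1)] : K < max c₀ (K+1)) hc
    refine csSup_le (hSne c) ?_
    rintro y ⟨x, rfl⟩
    set q := Function.invFun (pdp H x) (min b (-1)) with hqdef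
    have hq : pdp H x q = min b (-1) := invp_spec hCVX x _
    have hqz : q < z x := by
      refine ((hCVX x).1.lt_iff_lt).mp ?_
      rw [hq, hz x]
      exact lt_of_le_of_lt (min_le_right _ _) (by norm_num)
    have hmc := hm x c hcK
    have hmq : m x c ≤ q := by
      have h1 : H x q ≤ H x (m x c) := by
        rw [hmc.1]
        exact le_trans (hc₀ x) (le_trans (le_max_left _ _) hc)
      exact ((hanti x).le_iff_ge (mem_Iic.mpr hqz.le) (mem_Iic.mpr hmc.2.le)).mp h1
    calc pdp H x (m x c) ≤ pdp H x q := (hCVX x).1.monotone hmq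
      _ = min b (-1) := hq
      _ ≤ b := min_le_left _ _
  · -- Tendsto atTop
    rw [tendsto_atTop]
    intro b
    obtain ⟨c₀, hc₀⟩ := bound_lemma hC3 hCVX hX hCNH (max b 1)
    filter_upwards [eventually_ge_atTop (max c₀ (K+1))] with c hc
    have hcK : K < c := lt_of_lt_of_le (by linarith [le_max_right c₀ (K+1)] : K < max c₀ (K+1)) hc
    refine le_csInf (hTne c) ?_
    rintro y ⟨x, rfl⟩
    set q := Function.invFun (pdp H x) (max b 1) with hqdef
    have hq : pdp H x q = max b 1 := invp_spec hCVX x _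
    have hqz : z x < q := by
      refine ((hCVX x).1.lt_iff_lt).mp ?_
      rw [hq, hz x]
      exact lt_of_lt_of_le (by norm_num) (le_max_right _ _)
    have hMc := hM x c hcK
    have hqM : q ≤ M x c := by
      have h1 : H x q ≤ H x (M x c) := by
        rw [hMc.1]
        exact le_trans (hc₀ x) (le_trans (le_max_left _ _) hc)
      exact ((hmono x).le_iff_le (mem_Ici.mpr hqz.le) (mem_Ici.mpr hMc.2.le)).mp h1
    calc b ≤ max b 1 := le_max_left _ _
      _ = pdp H x q := hq.symm
      _ ≤ pdp H x (M x c) := (hCVX x).1.monotone hqM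
end
end

section
/- Let H satisfy (C3), (CNH) and (CVX). Fix T > 0 and W : ℝ → ℝ locally Lipschitz, and define U₀*(x) = sup{ W(q(T)) − ∫₀ᵀ L(q(s), q̇(s)) ds : q ∈ 𝓡_T, q(0) = x }. Then for every U₀ ∈ I_T^{HJ}(W) (i.e. every locally Lipschitz initial datum whose viscosity solution reaches W at time T) and every x ∈ ℝ, U₀(x) ≥ U₀*(x). -/
open Real Set MeasureTheory Filter Topology

noncomputable section

/-- The Legendre transform `L(x,v) = sup_p (p v − H(x,p))` of `H` in its second variable. -/
def Leg (H : ℝ → ℝ → ℝ) (x v : ℝ) : ℝ := ⨆ p : ℝ, (p * v - H x p)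

/-- `(q,p)` is a (global) solution of the Hamiltonian system (HS):
`q̇ = ∂ₚH(q,p)`, `ṗ = −∂ₓH(q,p)`. -/
def SolvesHS (H : ℝ → ℝ → ℝ) (q p : ℝ → ℝ) : Prop :=
  ∀ t : ℝ, HasDerivAt q (pdp H (q t) (p t)) t ∧ HasDerivAt p (-(pdx H (q t) (p t))) t

/-- The action `∫₀ᵀ L(q(s), q̇(s)) ds` of a curve `q` on `[0,T]`. -/
def rayCost (H : ℝ → ℝ → ℝ) (T : ℝ) (q : ℝ → ℝ) : ℝ :=
  ∫ s in (0:ℝ)..T, Leg H (q s) (deriv q s)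

/-- `U₀*(x) = sup { W(q(T)) − ∫₀ᵀ L(q,q̇) : q a Hamiltonian ray with q(0) = x }`. -/
def UStar (H : ℝ → ℝ → ℝ) (T : ℝ) (W : ℝ → ℝ) (x : ℝ) : ℝ :=
  sSup {y : ℝ | ∃ q p : ℝ → ℝ, SolvesHS H q p ∧ q 0 = x ∧ y = W (q T) - rayCost H T q}

/-- Crandall–Lions viscosity solution of `∂ₜU + H(x, ∂ₓU) = 0` on `(0,T) × ℝ`,
tested with `C¹` functions via local maxima/minima of `U − φ`. -/
def IsViscSol (H : ℝ → ℝ → ℝ) (T : ℝ) (U : ℝ × ℝ → ℝ) : Prop :=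
  (∀ φ : ℝ × ℝ → ℝ, ContDiff ℝ 1 φ → ∀ t₀ x₀ : ℝ, t₀ ∈ Set.Ioo 0 T →
      IsLocalMax (fun z => U z - φ z) (t₀, x₀) →
      deriv (fun t => φ (t, x₀)) t₀ + H x₀ (deriv (fun x => φ (t₀, x)) x₀) ≤ 0) ∧
  (∀ φ : ℝ × ℝ → ℝ, ContDiff ℝ 1 φ → ∀ t₀ x₀ : ℝ, t₀ ∈ Set.Ioo 0 T →
      IsLocalMin (fun z => U z - φ z) (t₀, x₀) →
      0 ≤ deriv (fun t => φ (t, x₀)) t₀ + H x₀ (deriv (fun x => φ (t₀, x)) x₀))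

/-- The inverse design `I_T^{HJ}(W)`: locally Lipschitz initial data `U₀` such that some
locally Lipschitz viscosity solution of (HJ) starts at `U₀` and reaches `W` at time `T`. -/
def InvDesignHJ (H : ℝ → ℝ → ℝ) (T : ℝ) (W : ℝ → ℝ) : Set (ℝ → ℝ) :=
  {U₀ | LocallyLipschitz U₀ ∧ ∃ U : ℝ × ℝ → ℝ, LocallyLipschitz U ∧ IsViscSol H T U ∧
    (∀ x, U (0, x) = U₀ x) ∧ (∀ x, U (T, x) = W x)}

namespace Stmt8

variable {H : ℝ → ℝ → ℝ}

/-- abbreviation for the full derivative -/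
def DH (H : ℝ → ℝ → ℝ) (z : ℝ × ℝ) : ℝ × ℝ →L[ℝ] ℝ := fderiv ℝ (Function.uncurry H) z

lemma hasFDerivAt_uncurry (hC3 : CondC3 H) (z : ℝ × ℝ) :
    HasFDerivAt (Function.uncurry H) (DH H z) z :=
  ((hC3.differentiable (by norm_num)) z).hasFDerivAt

lemma hasDerivAt_snd (hC3 : CondC3 H) (x u : ℝ) :
    HasDerivAt (fun v => H x v) (DH H (x, u) (0, 1)) u := by
  have h1 : HasDerivAt (fun v : ℝ => ((x : ℝ), v)) (((0 : ℝ), (1 : ℝ))) u :=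
    (hasDerivAt_const u x).prodMk (hasDerivAt_id u)
  exact (hasFDerivAt_uncurry hC3 (x, u)).comp_hasDerivAt u h1

lemma hasDerivAt_fst (hC3 : CondC3 H) (x u : ℝ) :
    HasDerivAt (fun y => H y u) (DH H (x, u) (1, 0)) x := by
  have h1 : HasDerivAt (fun y : ℝ => (y, (u : ℝ))) (((1 : ℝ), (0 : ℝ))) x :=
    (hasDerivAt_id x).prodMk (hasDerivAt_const x u)
  exact (hasFDerivAt_uncurry hC3 (x, u)).comp_hasDerivAt x h1

lemma pdp_eq (hC3 : CondC3 H) (x u : ℝ) : pdp H x u = DH H (x, u) (0, 1) :=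
  (hasDerivAt_snd hC3 x u).deriv

lemma pdx_eq (hC3 : CondC3 H) (x u : ℝ) : pdx H x u = DH H (x, u) (1, 0) :=
  (hasDerivAt_fst hC3 x u).deriv

lemma hasDerivAt_pdp (hC3 : CondC3 H) (x u : ℝ) :
    HasDerivAt (fun v => H x v) (pdp H x u) u := by
  rw [pdp_eq hC3]; exact hasDerivAt_snd hC3 x u

lemma hasDerivAt_pdx (hC3 : CondC3 H) (x u : ℝ) :
    HasDerivAt (fun y => H y u) (pdx H x u) x := by
  rw [pdx_eq hC3]; exact hasDerivAt_fst hC3 x u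

lemma contDiff_DH (hC3 : CondC3 H) : ContDiff ℝ 2 (DH H) :=
  hC3.fderiv_right (by norm_num)

lemma contDiff_pdp2 (hC3 : CondC3 H) : ContDiff ℝ 2 (fun z : ℝ × ℝ => pdp H z.1 z.2) := by
  have : (fun z : ℝ × ℝ => pdp H z.1 z.2) = fun z : ℝ × ℝ => DH H z (0, 1) := by
    funext z; exact pdp_eq hC3 z.1 z.2
  rw [this]
  exact (contDiff_DH hC3).clm_apply contDiff_const

lemma contDiff_pdx2 (hC3 : CondC3 H) : ContDiff ℝ 2 (fun z : ℝ × ℝ => pdx H z.1 z.2) := by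
  have : (fun z : ℝ × ℝ => pdx H z.1 z.2) = fun z : ℝ × ℝ => DH H z (1, 0) := by
    funext z; exact pdx_eq hC3 z.1 z.2
  rw [this]
  exact (contDiff_DH hC3).clm_apply contDiff_const

lemma continuous_pdp (hC3 : CondC3 H) : Continuous (fun z : ℝ × ℝ => pdp H z.1 z.2) :=
  (contDiff_pdp2 hC3).continuous

lemma continuous_pdx (hC3 : CondC3 H) : Continuous (fun z : ℝ × ℝ => pdx H z.1 z.2) :=
  (contDiff_pdx2 hC3).continuous

lemma continuous_H (hC3 : CondC3 H) : Continuous (Function.uncurry H) := hC3.continuous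

/-- convexity tangent line inequality -/
lemma tangent_le (hC3 : CondC3 H) (hCVX : CondCVX H) (x a b : ℝ) :
    H x a + (b - a) * pdp H x a ≤ H x b := by
  rcases lt_trichotomy a b with hab | hab | hab
  · obtain ⟨c, hc, hslope⟩ := exists_hasDerivAt_eq_slope (fun v => H x v) (pdp H x) hab
      (fun v _ => (hasDerivAt_pdp hC3 x v).continuousAt.continuousWithinAt)
      (fun v _ => hasDerivAt_pdp hC3 x v)
    have hmono : pdp H x a ≤ pdp H x c := ((hCVX x).1.le_iff_le).mpr hc.1.le
    have hslope' : H x b - H x a = (b - a) * pdp H x c := by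
      rw [eq_div_iff (sub_ne_zero.mpr hab.ne')] at hslope
      linarith [hslope]
    nlinarith [hslope', hmono, sub_pos.mpr hab]
  · simp [hab]
  · obtain ⟨c, hc, hslope⟩ := exists_hasDerivAt_eq_slope (fun v => H x v) (pdp H x) hab
      (fun v _ => (hasDerivAt_pdp hC3 x v).continuousAt.continuousWithinAt)
      (fun v _ => hasDerivAt_pdp hC3 x v)
    have hmono : pdp H x c ≤ pdp H x a := ((hCVX x).1.le_iff_le).mpr hc.2.le
    have hslope' : H x a - H x b = (a - b) * pdp H x c := by
      rw [eq_div_iff (sub_ne_zero.mpr hab.ne')] at hslope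
      linarith [hslope]
    nlinarith [hslope', hmono, sub_pos.mpr hab]

/-- evaluation of the Legendre transform at a dual pair -/
lemma Leg_eval (hC3 : CondC3 H) (hCVX : CondCVX H) (x pt : ℝ) :
    Leg H x (pdp H x pt) = pt * pdp H x pt - H x pt := by
  have hub : ∀ r : ℝ, r * pdp H x pt - H x r ≤ pt * pdp H x pt - H x pt := by
    intro r
    have := tangent_le hC3 hCVX x pt r
    nlinarith [this]
  refine le_antisymm (ciSup_le hub) ?_
  have hbdd : BddAbove (Set.range fun r : ℝ => r * pdp H x pt - H x r) := by
    refine ⟨pt * pdp H x pt - H x pt, ?_⟩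
    rintro y ⟨r, rfl⟩; exact hub r
  exact le_ciSup hbdd pt

section CNH
variable (X : ℝ) (hX : 0 < X) (hX0 : ∀ x p : ℝ, X ≤ |x| → pdx H x p = 0)

/-- clamp to [-X, X] -/
def cl (X : ℝ) (a : ℝ) : ℝ := max (-X) (min a X)

lemma cl_mem (hX : 0 < X) {a : ℝ} : cl X a ∈ Icc (-X) X :=
  ⟨le_max_left _ _, max_le (by linarith) (min_le_right _ _)⟩

lemma cl_eq_self {a : ℝ} (h : |a| ≤ X) : cl X a = a := by
  rw [abs_le] at h
  simp [cl, min_eq_left h.2, max_eq_right h.1]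

lemma cl_eq_pos (hX : 0 < X) {a : ℝ} (h : X ≤ a) : cl X a = X := by
  simp [cl, min_eq_right h]
  linarith

lemma cl_eq_neg (hX : 0 < X) {a : ℝ} (h : a ≤ -X) : cl X a = -X := by
  have : min a X = a := min_eq_left (by linarith)
  simp [cl, this, max_eq_left (by linarith : a ≤ -X)]

include hX hX0 in
lemma H_cl (hC3 : CondC3 H) (a b : ℝ) : H a b = H (cl X a) b := by
  rcases le_or_gt (|a|) X with h | h
  · rw [cl_eq_self X h]
  · rcases lt_or_ge a 0 with ha | ha
    · have haX : a < -X := by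
        rcases abs_cases a with ⟨h1, _⟩ | ⟨h1, _⟩ <;> linarith
      rw [cl_eq_neg X hX haX.le]
      obtain ⟨c, hc, hslope⟩ := exists_hasDerivAt_eq_slope (fun y => H y b) (fun y => pdx H y b)
        haX (fun v _ => (hasDerivAt_pdx hC3 v b).continuousAt.continuousWithinAt)
        (fun v _ => hasDerivAt_pdx hC3 v b)
      have hc0 : pdx H c b = 0 := hX0 c b (by
        rw [abs_of_neg (by linarith [hc.2] : c < 0)]; linarith [hc.2])
      rw [hc0] at hslope
      have h2 := hslope.symm
      rw [div_eq_iff (sub_ne_zero.mpr (by linarith [hc.1, hc.2] : (-X : ℝ) ≠ a))] at h2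
      linarith [h2]
    · have haX : X < a := by rwa [abs_of_nonneg ha] at h
      rw [cl_eq_pos X hX haX.le]
      obtain ⟨c, hc, hslope⟩ := exists_hasDerivAt_eq_slope (fun y => H y b) (fun y => pdx H y b)
        haX (fun v _ => (hasDerivAt_pdx hC3 v b).continuousAt.continuousWithinAt)
        (fun v _ => hasDerivAt_pdx hC3 v b)
      have hc0 : pdx H c b = 0 := hX0 c b (by
        rw [abs_of_pos (by linarith [hc.1] : (0:ℝ) < c)]; linarith [hc.1])
      rw [hc0] at hslope
      have h2 := hslope.symm
      rw [div_eq_iff (sub_ne_zero.mpr (by linarith [hc.1, hc.2] : a ≠ X))] at h2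
      linarith [h2]

include hX hX0 in
lemma pdp_cl (hC3 : CondC3 H) (a b : ℝ) : pdp H a b = pdp H (cl X a) b := by
  unfold pdp
  congr 1
  funext u
  exact H_cl X hX hX0 hC3 a u

include hX hX0 in
lemma pdx_cl (a b : ℝ) : pdx H a b = pdx H (cl X a) b := by
  rcases le_or_gt (|a|) X with h | h
  · rw [cl_eq_self X h]
  · have habs : |cl X a| = X := by
      rcases lt_or_ge a 0 with ha | ha
      · have haX : a ≤ -X := by
          rcases abs_cases a with ⟨h1, _⟩ | ⟨h1, _⟩ <;> linarith
        rw [cl_eq_neg X hX haX, abs_neg, abs_of_pos hX]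
      · have haX : X ≤ a := by rw [abs_of_nonneg ha] at h; linarith
        rw [cl_eq_pos X hX haX, abs_of_pos hX]
    rw [hX0 a b h.le, hX0 (cl X a) b (le_of_eq habs.symm)]

include hX hX0 in
lemma coercive (hC3 : CondC3 H) (hCVX : CondCVX H) (E : ℝ) :
    ∃ P : ℝ, 0 < P ∧ ∀ a b : ℝ, P ≤ |b| → E < H a b := by
  have hsur : ∀ (i v : ℝ), ∃ u, pdp H i u = v := fun i v => (hCVX i).2.1.2 v
  choose up hup using fun i => hsur i 1
  choose um hum using fun i => hsur i (-1)
  set V : ℝ → Set ℝ := fun i => {a : ℝ | (1/2 < pdp H a (up i) ∧ pdp H a (um i) < -(1/2)) ∧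
      (H i (up i) - 1 < H a (up i) ∧ H i (um i) - 1 < H a (um i))} with hV
  have hcontp : ∀ c : ℝ, Continuous (fun a : ℝ => pdp H a c) := by
    intro c
    exact (continuous_pdp hC3).comp (continuous_id.prodMk continuous_const)
  have hcontH : ∀ c : ℝ, Continuous (fun a : ℝ => H a c) := by
    intro c
    exact (continuous_H hC3).comp (continuous_id.prodMk continuous_const)
  have hVopen : ∀ i, IsOpen (V i) := by
    intro i
    apply IsOpen.and
    · exact IsOpen.and (isOpen_lt continuous_const (hcontp (up i)))
        (isOpen_lt (hcontp (um i)) continuous_const)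
    · exact IsOpen.and (isOpen_lt continuous_const (hcontH (up i)))
        (isOpen_lt continuous_const (hcontH (um i)))
  have hcover : Icc (-X) X ⊆ ⋃ i : ℝ, V i := by
    intro a _
    refine mem_iUnion.mpr ⟨a, ?_⟩
    refine ⟨⟨?_, ?_⟩, ?_, ?_⟩
    · rw [hup a]; norm_num
    · rw [hum a]; norm_num
    · linarith
    · linarith
  obtain ⟨t, ht⟩ := isCompact_Icc.elim_finite_subcover V hVopen hcover
  set c : ℝ → ℝ := fun i => 1 + |up i| + |um i| + 2*|E + 2 - H i (up i)| + 2*|E + 2 - H i (um i)|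
    with hc
  have hcpos : ∀ i, 0 ≤ c i := by intro i; rw [hc]; positivity
  refine ⟨1 + ∑ i ∈ t, c i, by positivity, ?_⟩
  intro a b hb
  rw [H_cl X hX hX0 hC3 a b]
  have hmem : cl X a ∈ Icc (-X) X := cl_mem X hX
  obtain ⟨i, hit, hai⟩ := mem_iUnion₂.mp (ht hmem)
  have hci : c i ≤ ∑ j ∈ t, c j := Finset.single_le_sum (fun j _ => hcpos j) hit
  set A := cl X a
  obtain ⟨⟨h1, h2⟩, h3, h4⟩ := hai
  rcases le_or_gt 0 b with hbpos | hbneg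
  · have hbge : 1 + c i ≤ b := by
      rw [abs_of_nonneg hbpos] at hb; linarith
    have htan := tangent_le hC3 hCVX A (up i) b
    have hkey : (E + 2 - H i (up i)) ≤ (b - up i) * pdp H A (up i) := by
      have hd : 2*|E + 2 - H i (up i)| + 1 ≤ b - up i := by
        have := abs_nonneg (E + 2 - H i (um i))
        have := abs_nonneg (um i)
        have := le_abs_self (up i)
        simp only [hc] at hbge; linarith
      nlinarith [abs_nonneg (E + 2 - H i (up i)), le_abs_self (E + 2 - H i (up i))]
    linarith
  · have hbge : b ≤ -(1 + c i) := by
      rw [abs_of_neg hbneg] at hb; linarith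
    have htan := tangent_le hC3 hCVX A (um i) b
    have hkey : (E + 2 - H i (um i)) ≤ (b - um i) * pdp H A (um i) := by
      have hd : b - um i ≤ -(2*|E + 2 - H i (um i)| + 1) := by
        have := abs_nonneg (E + 2 - H i (up i))
        have := abs_nonneg (up i)
        have := neg_abs_le (um i)
        simp only [hc] at hbge; linarith
      nlinarith [abs_nonneg (E + 2 - H i (um i)), le_abs_self (E + 2 - H i (um i))]
    linarith

end CNH

/-- constancy from vanishing derivative on an interval -/
lemma const_of_deriv0 {g : ℝ → ℝ} {t₁ t₂ : ℝ} (h : t₁ ≤ t₂)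
    (hg : ∀ s ∈ Icc t₁ t₂, HasDerivAt g 0 s) : g t₂ = g t₁ := by
  rcases eq_or_lt_of_le h with rfl | hlt
  · rfl
  obtain ⟨c, hc, hslope⟩ := exists_hasDerivAt_eq_slope g (fun _ => 0) hlt
    (fun v hv => (hg v hv).continuousAt.continuousWithinAt)
    (fun v hv => hg v (Ioo_subset_Icc_self hv))
  have h2 := hslope.symm
  rw [div_eq_iff (sub_ne_zero.mpr hlt.ne')] at h2
  linarith

section Exist
variable (X : ℝ) (hX : 0 < X) (hX0 : ∀ x p : ℝ, X ≤ |x| → pdx H x p = 0)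

/-- the Hamiltonian vector field -/
def Fham (H : ℝ → ℝ → ℝ) : ℝ × ℝ → ℝ × ℝ := fun z => (pdp H z.1 z.2, -(pdx H z.1 z.2))

lemma contDiff_Fham (hC3 : CondC3 H) : ContDiff ℝ 2 (Fham H) :=
  ContDiff.prodMk (contDiff_pdp2 hC3) (contDiff_pdx2 hC3).neg

include hX hX0 in
lemma exists_ray (hC3 : CondC3 H) (hCVX : CondCVX H) (x : ℝ) :
    ∃ q p : ℝ → ℝ,
      (∀ t : ℝ, HasDerivAt q (pdp H (q t) (p t)) t ∧ HasDerivAt p (-(pdx H (q t) (p t))) t) ∧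
      q 0 = x := by
  classical
  obtain ⟨P, hP, hPco⟩ := coercive X hX hX0 hC3 hCVX (H x 0)
  set Q : Set (ℝ × ℝ) := Icc (-X) X ×ˢ Icc (-P) P with hQ
  have hQcomp : IsCompact Q := isCompact_Icc.prod isCompact_Icc
  have hQconv : Convex ℝ Q := (convex_Icc _ _).prod (convex_Icc _ _)
  -- clamping map
  set cl2 : ℝ × ℝ → ℝ × ℝ := fun z => (cl X z.1, cl P z.2) with hcl2
  have hclX : LipschitzWith 1 (cl X) := by
    have h1 : LipschitzWith 1 (fun a : ℝ => min a X) := LipschitzWith.id.min_const X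
    have h2 := h1.const_max (-X)
    exact h2
  have hclP : LipschitzWith 1 (cl P) := by
    have h1 : LipschitzWith 1 (fun a : ℝ => min a P) := LipschitzWith.id.min_const P
    exact h1.const_max (-P)
  have hcl2lip : LipschitzWith 1 cl2 := by
    have h1 : LipschitzWith (1 * 1) (fun z : ℝ × ℝ => cl X z.1) :=
      hclX.comp LipschitzWith.prod_fst
    have h2 : LipschitzWith (1 * 1) (fun z : ℝ × ℝ => cl P z.2) :=
      hclP.comp LipschitzWith.prod_snd
    have := h1.prodMk h2
    simpa using this
  have hcl2maps : ∀ z : ℝ × ℝ, cl2 z ∈ Q := by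
    intro z
    exact ⟨cl_mem X hX, cl_mem P hP⟩
  -- Lipschitz constant of F on Q
  have hFd : Continuous (fderiv ℝ (Fham H)) := (contDiff_Fham hC3).continuous_fderiv (by norm_num)
  obtain ⟨C₁, hC₁⟩ := hQcomp.exists_bound_of_continuousOn hFd.continuousOn
  set K : NNReal := ⟨max C₁ 0, le_max_right _ _⟩ with hK
  have hFQlip : LipschitzOnWith K (Fham H) Q := by
    apply Convex.lipschitzOnWith_of_nnnorm_fderiv_le
      (fun z _ => ((contDiff_Fham hC3).differentiable (by norm_num)).differentiableAt)
      (fun z hz => ?_) hQconv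
    have : ‖fderiv ℝ (Fham H) z‖ ≤ max C₁ 0 := le_trans (hC₁ z hz) (le_max_left _ _)
    exact this
  -- the modified field
  set Ft : ℝ × ℝ → ℝ × ℝ := fun z => Fham H (cl2 z) with hFt
  have hFtlip : LipschitzWith (K * 1) Ft := by
    rw [← lipschitzOnWith_univ]
    exact hFQlip.comp (hcl2lip.lipschitzOnWith) (fun z _ => hcl2maps z)
  obtain ⟨C₂, hC₂⟩ := hQcomp.exists_bound_of_continuousOn (contDiff_Fham hC3).continuous.continuousOn
  have hFtb : ∀ z, ‖Ft z‖ ≤ max C₂ 0 := fun z =>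
    le_trans (hC₂ _ (hcl2maps z)) (le_max_left _ _)
  set C : ℝ := max C₂ 0 with hC
  have hC0 : 0 ≤ C := le_max_right _ _
  -- Picard-Lindelöf on each [-(n+1), n+1]
  set z₀ : ℝ × ℝ := (x, 0) with hz₀
  have hpl : ∀ n : ℕ, IsPicardLindelof (fun _ z => Ft z) (tmin := -(n+1 : ℝ)) (tmax := (n+1 : ℝ))
      ⟨0, by constructor <;> linarith [Nat.cast_nonneg (α := ℝ) n]⟩ z₀
      ⟨C * (n+1) + 1, add_nonneg (mul_nonneg hC0 (by positivity)) zero_le_one⟩ 0 ⟨C, hC0⟩ (K * 1) := by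
    intro n
    constructor
    · exact fun t _ => hFtlip.lipschitzOnWith
    · exact fun z _ => continuousOn_const
    · exact fun t _ z _ => hFtb z
    · show C * max ((n+1 : ℝ) - 0) (0 - -(n+1 : ℝ)) ≤ (C * (n+1) + 1) - 0
      simp only [sub_zero, zero_sub, neg_neg, max_self]
      nlinarith [Nat.cast_nonneg (α := ℝ) n]
  choose f hf0 hfd using fun n : ℕ => IsPicardLindelof.exists_eq_forall_mem_Icc_hasDerivWithinAt₀ (hpl n)
  replace hf0 : ∀ n : ℕ, f n 0 = z₀ := hf0
  have hfd' : ∀ n : ℕ, ∀ t ∈ Ioo (-(n+1 : ℝ)) (n+1 : ℝ), HasDerivAt (f n) (Ft (f n t)) t :=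
    fun n t ht => (hfd n t (Ioo_subset_Icc_self ht)).hasDerivAt (Icc_mem_nhds ht.1 ht.2)
  -- agreement of solutions
  have agree : ∀ m n : ℕ, ∀ t : ℝ, |t| < m + 1 → |t| < n + 1 → f m t = f n t := by
    intro m n t h1 h2
    have hK' : ∀ s : ℝ, LipschitzWith (K * 1) ((fun (_ : ℝ) z => Ft z) s) := fun _ => hFtlip
    rcases le_or_gt 0 t with ht | ht
    · rw [abs_of_nonneg ht] at h1 h2
      have hsub : ∀ k : ℕ, t < k + 1 → ∀ s ∈ Icc (0:ℝ) t, s ∈ Ioo (-(k+1:ℝ)) (k+1:ℝ) := by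
        intro k hk s hs
        constructor
        · have : (0:ℝ) < k + 1 := by positivity
          linarith [hs.1]
        · linarith [hs.2]
      have := ODE_solution_unique (v := fun (_ : ℝ) z => Ft z) (f := f m) (g := f n)
        (a := 0) (b := t) hK'
        (fun s hs => (hfd' m s (hsub m h1 s hs)).continuousAt.continuousWithinAt)
        (fun s hs => (hfd' m s (hsub m h1 s (Ico_subset_Icc_self hs))).hasDerivWithinAt)
        (fun s hs => (hfd' n s (hsub n h2 s hs)).continuousAt.continuousWithinAt)
        (fun s hs => (hfd' n s (hsub n h2 s (Ico_subset_Icc_self hs))).hasDerivWithinAt)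
        (by rw [hf0 m, hf0 n])
      exact this (right_mem_Icc.mpr ht)
    · rw [abs_of_neg ht] at h1 h2
      have hsub : ∀ k : ℕ, -t < k + 1 → ∀ s ∈ Icc t (0:ℝ), s ∈ Ioo (-(k+1:ℝ)) (k+1:ℝ) := by
        intro k hk s hs
        constructor
        · linarith [hs.1]
        · have : (0:ℝ) < k + 1 := by positivity
          linarith [hs.2]
      have := ODE_solution_unique_of_mem_Icc_left (v := fun (_ : ℝ) z => Ft z)
        (s := fun _ => univ) (f := f m) (g := f n) (a := t) (b := 0)
        (fun s _ => (hK' s).lipschitzOnWith)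
        (fun s hs => (hfd' m s (hsub m h1 s hs)).continuousAt.continuousWithinAt)
        (fun s hs => (hfd' m s (hsub m h1 s (Ioc_subset_Icc_self hs))).hasDerivWithinAt)
        (fun _ _ => mem_univ _)
        (fun s hs => (hfd' n s (hsub n h2 s hs)).continuousAt.continuousWithinAt)
        (fun s hs => (hfd' n s (hsub n h2 s (Ioc_subset_Icc_self hs))).hasDerivWithinAt)
        (fun _ _ => mem_univ _)
        (by rw [hf0 m, hf0 n])
      exact this (left_mem_Icc.mpr ht.le)
  -- glued global solution
  set z : ℝ → ℝ × ℝ := fun t => f ⌈|t|⌉₊ t with hzdef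
  have habs : ∀ t : ℝ, |t| < (⌈|t|⌉₊ : ℝ) + 1 := fun t =>
    lt_of_le_of_lt (Nat.le_ceil _) (by linarith)
  have hz0 : z 0 = z₀ := by
    simp only [hzdef]
    exact hf0 _
  have hz : ∀ t : ℝ, HasDerivAt z (Ft (z t)) t := by
    intro t
    set m : ℕ := ⌈|t|⌉₊ with hm
    set γ : ℝ := ((m : ℝ) + 1 - |t|) / 2 with hγ
    have hγpos : 0 < γ := by
      have := habs t
      rw [hγ]; linarith
    have heq : ∀ s : ℝ, |s - t| < γ → z s = f m s := by
      intro s hs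
      have h1 : |s| < (m : ℝ) + 1 := by
        have : |s| ≤ |s - t| + |t| := by
          calc |s| = |s - t + t| := by ring_nf
          _ ≤ |s - t| + |t| := abs_add_le _ _
        rw [hγ] at hs
        linarith
      exact agree _ m s (habs s) h1
    have hfm : HasDerivAt (f m) (Ft (f m t)) t := by
      apply hfd' m t
      constructor
      · have := habs t; have := neg_abs_le t; linarith
      · have := habs t; have := le_abs_self t; linarith
    have heq' : z =ᶠ[nhds t] f m := by
      filter_upwards [Metric.ball_mem_nhds t hγpos] with s hs
      exact heq s (by simpa [Real.dist_eq] using hs)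
    have hzt : z t = f m t := heq t (by simpa using hγpos)
    rw [hzt]
    exact (Filter.EventuallyEq.hasDerivAt_iff heq').mpr hfm
  set q : ℝ → ℝ := fun t => (z t).1 with hqdef
  set p : ℝ → ℝ := fun t => (z t).2 with hpdef
  have hq' : ∀ t, HasDerivAt q ((Ft (z t)).1) t := by
    intro t
    exact ((ContinuousLinearMap.fst ℝ ℝ ℝ).hasFDerivAt.comp_hasDerivAt t (hz t))
  have hp' : ∀ t, HasDerivAt p ((Ft (z t)).2) t := by
    intro t
    exact ((ContinuousLinearMap.snd ℝ ℝ ℝ).hasFDerivAt.comp_hasDerivAt t (hz t))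
  have hpc : Continuous p := by
    rw [continuous_iff_continuousAt]; exact fun t => (hp' t).continuousAt
  have hp0 : p 0 = 0 := by rw [hpdef]; simp only [hz0, hz₀]
  have hq0 : q 0 = x := by rw [hqdef]; simp only [hz0, hz₀]
  -- on the good region the fields agree
  have hgood : ∀ t, |p t| ≤ P → Ft (z t) = (pdp H (q t) (p t), -(pdx H (q t) (p t))) := by
    intro t hpt
    have h1 : cl2 (z t) = (cl X (q t), p t) := by
      simp only [hcl2]
      rw [cl_eq_self P hpt]
    show Fham H (cl2 (z t)) = _
    rw [h1]
    show (pdp H (cl X (q t)) (p t), -(pdx H (cl X (q t)) (p t))) = _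
    rw [← pdp_cl X hX hX0 hC3, ← pdx_cl X hX hX0]
  -- energy conservation
  have econst : ∀ t₁ t₂ : ℝ, t₁ ≤ t₂ → (∀ s ∈ Icc t₁ t₂, |p s| ≤ P) →
      H (q t₂) (p t₂) = H (q t₁) (p t₁) := by
    intro t₁ t₂ h12 hgd
    apply const_of_deriv0 h12
    intro s hs
    have hder : HasDerivAt (fun s => H (q s) (p s)) (DH H (z s) (Ft (z s))) s := by
      have := (hasFDerivAt_uncurry hC3 (z s)).comp_hasDerivAt s (hz s)
      exact this
    have hval : DH H (z s) (Ft (z s)) = 0 := by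
      rw [hgood s (hgd s hs)]
      have hsplit : ((pdp H (q s) (p s), -(pdx H (q s) (p s))) : ℝ × ℝ)
          = (pdp H (q s) (p s)) • ((1:ℝ), (0:ℝ)) + (-(pdx H (q s) (p s))) • ((0:ℝ), (1:ℝ)) := by
        simp [Prod.ext_iff]
      rw [hsplit, map_add, _root_.map_smul, _root_.map_smul]
      have e1 : DH H (z s) (1, 0) = pdx H (q s) (p s) := (pdx_eq hC3 (q s) (p s)).symm
      have e2 : DH H (z s) (0, 1) = pdp H (q s) (p s) := (pdp_eq hC3 (q s) (p s)).symm
      simp only [smul_eq_mul]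
      rw [e1, e2]
      ring
    rw [← hval]
    exact hder
  -- invariance: |p t| < P for all t
  have hinv : ∀ t : ℝ, |p t| < P := by
    intro t
    by_contra hcon
    push_neg at hcon
    rcases le_or_gt 0 t with ht | ht
    · set S : Set ℝ := {s | s ∈ Icc 0 t ∧ P ≤ |p s|} with hS
      have hSne : S.Nonempty := ⟨t, ⟨⟨ht, le_refl t⟩, hcon⟩⟩
      have hScl : IsClosed S := by
        apply IsClosed.inter isClosed_Icc
        exact isClosed_le continuous_const hpc.abs
      have hSbdd : BddBelow S := ⟨0, fun s hs => hs.1.1⟩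
      set t₀ := sInf S with ht₀
      have ht₀S : t₀ ∈ S := hScl.csInf_mem hSne hSbdd
      have ht₀pos : 0 < t₀ := by
        rcases lt_or_eq_of_le ht₀S.1.1 with h | h
        · exact h
        · exfalso
          have h0 : |p t₀| = 0 := by rw [← h, hp0]; simp
          have hPle : P ≤ |p t₀| := ht₀S.2
          rw [h0] at hPle
          linarith
      have hlt : ∀ s, 0 ≤ s → s < t₀ → |p s| < P := by
        intro s hs0 hst
        by_contra hc
        push_neg at hc
        have : s ∈ S := ⟨⟨hs0, le_trans hst.le ht₀S.1.2⟩, hc⟩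
        linarith [csInf_le hSbdd this]
      have hle : ∀ s ∈ Icc (0:ℝ) t₀, |p s| ≤ P := by
        intro s hs
        rcases lt_or_eq_of_le hs.2 with h | h
        · exact (hlt s hs.1 h).le
        · -- s = t₀ : use continuity from the left
          rw [h]
          have htend : Tendsto (fun u => |p u|) (nhdsWithin t₀ (Iio t₀)) (nhds (|p t₀|)) :=
            (hpc.abs.tendsto t₀).mono_left nhdsWithin_le_nhds
          have hev : ∀ᶠ u in nhdsWithin t₀ (Iio t₀), |p u| ≤ P := by
            filter_upwards [Ioo_mem_nhdsLT_of_mem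
              (⟨ht₀pos, le_refl t₀⟩ : t₀ ∈ Ioc (0:ℝ) t₀)] with u hu
            exact (hlt u hu.1.le hu.2).le
          exact le_of_tendsto htend hev
      have hE := econst 0 t₀ ht₀pos.le hle
      rw [hq0, hp0] at hE
      have := hPco (q t₀) (p t₀) ht₀S.2
      rw [hE] at this
      exact lt_irrefl _ this
    · -- symmetric case t < 0
      set S : Set ℝ := {s | s ∈ Icc t 0 ∧ P ≤ |p s|} with hS
      have hSne : S.Nonempty := ⟨t, ⟨⟨le_refl t, ht.le⟩, hcon⟩⟩
      have hScl : IsClosed S := by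
        apply IsClosed.inter isClosed_Icc
        exact isClosed_le continuous_const hpc.abs
      have hSbdd : BddAbove S := ⟨0, fun s hs => hs.1.2⟩
      set t₀ := sSup S with ht₀
      have ht₀S : t₀ ∈ S := hScl.csSup_mem hSne hSbdd
      have ht₀neg : t₀ < 0 := by
        rcases lt_or_eq_of_le ht₀S.1.2 with h | h
        · exact h
        · exfalso
          have h0 : |p t₀| = 0 := by rw [h, hp0]; simp
          have hPle : P ≤ |p t₀| := ht₀S.2
          rw [h0] at hPle
          linarith
      have hlt : ∀ s, s ≤ 0 → t₀ < s → |p s| < P := by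
        intro s hs0 hst
        by_contra hc
        push_neg at hc
        have : s ∈ S := ⟨⟨le_trans ht₀S.1.1 hst.le, hs0⟩, hc⟩
        linarith [le_csSup hSbdd this]
      have hle : ∀ s ∈ Icc t₀ (0:ℝ), |p s| ≤ P := by
        intro s hs
        rcases lt_or_eq_of_le hs.1 with h | h
        · exact (hlt s hs.2 h).le
        · rw [← h]
          have htend : Tendsto (fun u => |p u|) (nhdsWithin t₀ (Ioi t₀)) (nhds (|p t₀|)) :=
            (hpc.abs.tendsto t₀).mono_left nhdsWithin_le_nhds
          have hev : ∀ᶠ u in nhdsWithin t₀ (Ioi t₀), |p u| ≤ P := by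
            filter_upwards [Ioo_mem_nhdsGT_of_mem
              (⟨le_refl t₀, ht₀neg⟩ : t₀ ∈ Ico t₀ (0:ℝ))] with u hu
            exact (hlt u hu.2.le hu.1).le
          exact le_of_tendsto htend hev
      have hE := econst t₀ 0 ht₀neg.le hle
      rw [hq0, hp0] at hE
      have := hPco (q t₀) (p t₀) ht₀S.2
      rw [← hE] at this
      exact lt_irrefl _ this
  refine ⟨q, p, fun t => ?_, hq0⟩
  have hft := hgood t (hinv t).le
  constructor
  · have := hq' t
    rw [hft] at this
    exact this
  · have := hp' t
    rw [hft] at this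
    exact this

end Exist



/-- the C¹ barrier `t ↦ (max (t-b) 0)²` -/
lemma relu_sq (b : ℝ) (t : ℝ) :
    HasDerivAt (fun s => (max (s - b) 0)^2) (2 * max (t - b) 0) t := by
  rcases lt_trichotomy t b with h | h | h
  · have hev : (fun s => (max (s - b) 0)^2) =ᶠ[nhds t] (fun _ => (0:ℝ)) := by
      filter_upwards [Iio_mem_nhds h] with s hs
      rw [max_eq_right (by simp only [mem_Iio] at hs; linarith)]
      norm_num
    rw [max_eq_right (by linarith), mul_zero]
    exact (Filter.EventuallyEq.hasDerivAt_iff hev).mpr (hasDerivAt_const t 0)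
  · subst h
    rw [hasDerivAt_iff_tendsto_slope]
    have hb : ∀ s : ℝ, |slope (fun s => (max (s - t) 0)^2) t s| ≤ |s - t| := by
      intro s
      rcases eq_or_ne s t with rfl | hst
      · simp [slope]
      · rw [slope_def_field]
        have h1 : (max (t - t) 0) = 0 := by simp
        have habs : 0 < |s - t| := abs_pos.mpr (sub_ne_zero.mpr hst)
        have h2 : (max (s - t) 0)^2 ≤ |s - t|^2 := by
          rcases le_or_gt (s - t) 0 with hh | hh
          · rw [max_eq_right hh]
            have h00 : (0:ℝ)^2 = 0 := by norm_num
            rw [h00]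
            positivity
          · rw [max_eq_left hh.le, sq_abs]
        have h3 : |((max (s - t) 0)^2 - (max (t - t) 0)^2)| ≤ |s - t| * |s - t| := by
          rw [h1]
          rw [show ((0:ℝ))^2 = 0 by norm_num, sub_zero,
            abs_of_nonneg (by positivity : (0:ℝ) ≤ (max (s-t) 0)^2)]
          calc (max (s - t) 0)^2 ≤ |s - t|^2 := h2
            _ = |s - t| * |s - t| := by ring
        rw [abs_div, div_le_iff₀ habs]
        exact h3
    have htend : Tendsto (fun s => |s - t|) (nhdsWithin t {t}ᶜ) (nhds 0) := by
      have h5 : Tendsto (fun s => |s - t|) (nhds t) (nhds (|t - t|)) :=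
        ((continuous_id.sub continuous_const).abs.tendsto t)
      simpa using h5.mono_left nhdsWithin_le_nhds
    have h0 : max (t - t) 0 = 0 := by simp
    rw [h0, mul_zero]
    exact squeeze_zero_norm (fun s => by simpa [Real.norm_eq_abs] using hb s) htend
  · have hev : (fun s => (max (s - b) 0)^2) =ᶠ[nhds t] (fun s => (s - b)^2) := by
      filter_upwards [Ioi_mem_nhds h] with s hs
      rw [max_eq_left (by simp only [mem_Ioi] at hs; linarith)]
    rw [max_eq_left (by linarith)]
    have hd : HasDerivAt (fun s : ℝ => (s - b)^2) (2 * (t - b)) t := by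
      have := ((hasDerivAt_id t).sub_const b).fun_pow 2
      simpa using this
    exact (Filter.EventuallyEq.hasDerivAt_iff hev).mpr hd

/-- continuity of the barrier derivative -/
lemma relu_cont (b : ℝ) : Continuous (fun t : ℝ => max (t - b) 0) :=
  (continuous_id.sub continuous_const).max continuous_const

/-- monotonicity for viscosity subsolutions of `w' ≤ f` -/
lemma visc_mono {v f : ℝ → ℝ} {T : ℝ} (hT : 0 < T) (hv : Continuous v) (hf : Continuous f)
    (hP : ∀ t₀ ∈ Ioo (0:ℝ) T, ∀ ψ : ℝ → ℝ, ContDiff ℝ 1 ψ →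
      IsLocalMax (fun t => v t - ψ t) t₀ → deriv ψ t₀ ≤ f t₀) :
    v T - v 0 ≤ ∫ s in (0:ℝ)..T, f s := by
  set F : ℝ → ℝ := fun t => ∫ s in (0:ℝ)..t, f s with hFdef
  have hF : ∀ t, HasDerivAt F (f t) t := fun t => (hf.integral_hasStrictDerivAt 0 t).hasDerivAt
  set w : ℝ → ℝ := fun t => v t - F t with hwdef
  have hFc : Continuous F := by
    rw [continuous_iff_continuousAt]; exact fun t => (hF t).continuousAt
  have hw : Continuous w := hv.sub hFc
  have hF0 : F 0 = 0 := intervalIntegral.integral_same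
  show v T - v 0 ≤ F T
  clear_value F
  clear_value w
  have key : ∀ a b : ℝ, 0 < a → a < b → b < T → w b ≤ w a := by
    intro a b ha hab hbT
    by_contra hcon
    push_neg at hcon
    have hwba : 0 < w b - w a := by linarith
    obtain ⟨ε, hεpos, hεab⟩ : ∃ ε : ℝ, 0 < ε ∧ ε * b - ε * a = (w b - w a) / 2 := by
      refine ⟨(w b - w a) / (2 * (b - a)), div_pos hwba (by linarith), ?_⟩
      have hba : b - a ≠ 0 := ne_of_gt (by linarith)
      field_simp
    obtain ⟨sR, hbs, hsT⟩ : ∃ sR : ℝ, b < sR ∧ sR < T :=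
      ⟨(b + T) / 2, by constructor <;> linarith⟩
    set G : ℝ → ℝ := fun t => (max (t - b) 0)^2 with hGdef
    have hG : ∀ t, HasDerivAt G (2 * max (t - b) 0) t := relu_sq b
    obtain ⟨M, hM0, hMlarge⟩ : ∃ M : ℝ, 0 ≤ M ∧
        w sR - w b - ε * (sR - b) + 1 ≤ M * (sR - b)^2 := by
      refine ⟨max 0 ((w sR - w b - ε * (sR - b) + 1) / (sR - b)^2), le_max_left _ _, ?_⟩
      have h1 : (w sR - w b - ε * (sR - b) + 1) / (sR - b)^2 ≤
          max 0 ((w sR - w b - ε * (sR - b) + 1) / (sR - b)^2) := le_max_right _ _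
      rw [div_le_iff₀ (pow_pos (sub_pos.mpr hbs) 2)] at h1
      linarith
    set Φ : ℝ → ℝ := fun t => w t - (ε * t + M * G t) with hΦ
    have hΦc : Continuous Φ := by
      apply hw.sub
      apply Continuous.add (continuous_const.mul continuous_id)
      exact continuous_const.mul ((relu_cont b).pow 2)
    obtain ⟨c, hcmem, hcmax⟩ := (isCompact_Icc : IsCompact (Icc a sR)).exists_isMaxOn
      (nonempty_Icc.mpr (by linarith)) hΦc.continuousOn (f := Φ)
    have hGb : G b = 0 := by rw [hGdef]; simp
    have hGa : G a = 0 := by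
      rw [hGdef]; simp only [max_eq_right (by linarith : a - b ≤ 0)]; norm_num
    have hGs : G sR = (sR - b)^2 := by
      rw [hGdef]; simp only [max_eq_left (by linarith : (0:ℝ) ≤ sR - b)]
    have hεsb : ε * (sR - b) = ε * sR - ε * b := by ring
    have hΦab : Φ a < Φ b := by
      simp only [hΦ, hGa, hGb, mul_zero, add_zero]
      linarith [hεab, hcon]
    have hΦs : Φ sR < Φ b := by
      simp only [hΦ, hGs, hGb, mul_zero, add_zero]
      linarith [hMlarge, hεsb]
    have hcb : Φ b ≤ Φ c := hcmax (show b ∈ Icc a sR from ⟨hab.le, hbs.le⟩)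
    have hΦca : Φ a ≤ Φ c := hcmax (show a ∈ Icc a sR from ⟨le_refl a, by linarith⟩)
    have hca : c ≠ a := by rintro rfl; linarith
    have hcs : c ≠ sR := by rintro rfl; linarith
    have hcIoo : c ∈ Ioo a sR := by
      rcases hcmem with ⟨h1, h2⟩
      exact ⟨lt_of_le_of_ne h1 (Ne.symm hca), lt_of_le_of_ne h2 hcs⟩
    have hlocmax : IsLocalMax Φ c := hcmax.isLocalMax (Icc_mem_nhds hcIoo.1 hcIoo.2)
    set ψ : ℝ → ℝ := fun t => ε * t + M * G t + F t with hψ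
    have hψd : ∀ t, HasDerivAt ψ (ε + M * (2 * max (t - b) 0) + f t) t := by
      intro t
      have h1 : HasDerivAt (fun s : ℝ => ε * s) ε t := by
        simpa using (hasDerivAt_id t).const_mul ε
      exact (h1.add ((hG t).const_mul M)).add (hF t)
    have hψC1 : ContDiff ℝ 1 ψ := by
      rw [contDiff_one_iff_deriv]
      constructor
      · exact fun t => (hψd t).differentiableAt
      · have h6 : deriv ψ = fun t => ε + M * (2 * max (t - b) 0) + f t := by
          funext t; exact (hψd t).deriv
        rw [h6]
        exact (continuous_const.add (continuous_const.mul (continuous_const.mul (relu_cont b)))).add hf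
    have hΦψ : (fun t => v t - ψ t) = Φ := by
      funext t; simp only [hΦ, hψ, hwdef]; ring
    have hder := hP c ⟨lt_trans ha hcIoo.1, lt_trans hcIoo.2 hsT⟩ ψ hψC1
      (by rw [hΦψ]; exact hlocmax)
    rw [(hψd c).deriv] at hder
    linarith [hεpos,
      mul_nonneg hM0 (mul_nonneg (by norm_num : (0:ℝ) ≤ 2) (le_max_right (c - b) 0))]
  have h2 : ∀ a ∈ Ioo (0:ℝ) T, w T ≤ w a := by
    intro a ha
    have htend : Tendsto w (nhdsWithin T (Iio T)) (nhds (w T)) :=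
      (hw.tendsto T).mono_left nhdsWithin_le_nhds
    refine le_of_tendsto htend ?_
    filter_upwards [Ioo_mem_nhdsLT_of_mem (⟨ha.2, le_refl T⟩ : T ∈ Ioc a T)] with b hb
    exact key a b ha.1 hb.1 hb.2
  have h3 : w T ≤ w 0 := by
    have htend : Tendsto w (nhdsWithin 0 (Ioi 0)) (nhds (w 0)) :=
      (hw.tendsto 0).mono_left nhdsWithin_le_nhds
    refine ge_of_tendsto htend ?_
    filter_upwards [Ioo_mem_nhdsGT_of_mem (⟨le_refl (0:ℝ), hT⟩ : (0:ℝ) ∈ Ico 0 T)] with a ha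
    exact h2 a ha
  rw [hwdef] at h3
  simp only at h3
  linarith [h3]

set_option maxHeartbeats 1600000 in
/-- The key doubling-of-variables lemma: along a Hamiltonian ray, the value of a Lipschitz
viscosity subsolution satisfies the differential inequality tested with C¹ functions. -/
lemma key_P (hC3 : CondC3 H) (hCVX : CondCVX H) {T : ℝ}
    {U : ℝ × ℝ → ℝ} (hU : LocallyLipschitz U)
    (hsub : ∀ φ : ℝ × ℝ → ℝ, ContDiff ℝ 1 φ → ∀ t₀ x₀ : ℝ, t₀ ∈ Set.Ioo 0 T →
      IsLocalMax (fun z => U z - φ z) (t₀, x₀) →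
      deriv (fun t => φ (t, x₀)) t₀ + H x₀ (deriv (fun x => φ (t₀, x)) x₀) ≤ 0)
    {q p : ℝ → ℝ}
    (hq : ∀ t, HasDerivAt q (pdp H (q t) (p t)) t)
    (hp : ∀ t, HasDerivAt p (-(pdx H (q t) (p t))) t)
    (t₀ : ℝ) (ht₀ : t₀ ∈ Ioo (0:ℝ) T) (ψ : ℝ → ℝ) (hψ : ContDiff ℝ 1 ψ)
    (hmax : IsLocalMax (fun t => U (t, q t) - ψ t) t₀) :
    deriv ψ t₀ ≤ p t₀ * pdp H (q t₀) (p t₀) - H (q t₀) (p t₀) := by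
  have hqc : Continuous q := by
    rw [continuous_iff_continuousAt]; exact fun t => (hq t).continuousAt
  have hpc : Continuous p := by
    rw [continuous_iff_continuousAt]; exact fun t => (hp t).continuousAt
  have hqC1 : ContDiff ℝ 1 q := by
    rw [contDiff_one_iff_deriv]
    refine ⟨fun t => (hq t).differentiableAt, ?_⟩
    have hd : deriv q = fun t => pdp H (q t) (p t) := funext fun t => (hq t).deriv
    rw [hd]
    exact (continuous_pdp hC3).comp (hqc.prodMk hpc)
  have hψ' : Continuous (deriv ψ) := (contDiff_one_iff_deriv.mp hψ).2
  -- Lipschitz data near the base point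
  obtain ⟨K₀, s, hs, hlip⟩ := hU (t₀, q t₀)
  obtain ⟨r, hr, hball⟩ := Metric.mem_nhds_iff.mp hs
  set K : ℝ := (K₀ : ℝ) + 1 with hK
  have hKpos : 0 < K := by positivity
  have hUlip : ∀ z z' : ℝ × ℝ, z ∈ Metric.ball (t₀, q t₀) r → z' ∈ Metric.ball (t₀, q t₀) r →
      U z - U z' ≤ K * dist z z' := by
    intro z z' hz hz'
    have h1 := hlip.dist_le_mul z (hball hz) z' (hball hz')
    have h2 : dist (U z) (U z') ≤ K * dist z z' := by
      refine le_trans h1 ?_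
      apply mul_le_mul_of_nonneg_right _ dist_nonneg
      rw [hK]; linarith [K₀.coe_nonneg]
    calc U z - U z' ≤ |U z - U z'| := le_abs_self _
      _ = dist (U z) (U z') := (Real.dist_eq _ _).symm
      _ ≤ K * dist z z' := h2
  clear_value K
  -- local max radius
  obtain ⟨δ₁, hδ₁pos, hδ₁⟩ := Metric.eventually_nhds_iff.mp hmax
  apply le_of_forall_pos_le_add
  intro η hη
  set RHS : ℝ := p t₀ * pdp H (q t₀) (p t₀) - H (q t₀) (p t₀) with hRHS
  set A : ℝ × ℝ → ℝ := fun z =>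
    2*K*|pdp H (q z.1) (p z.1) - pdp H z.2 (p z.1)| +
      (p z.1 * pdp H z.2 (p z.1) - H z.2 (p z.1)) + 2*|z.1 - t₀| with hA
  have hAc : Continuous A := by
    have c1 : Continuous fun z : ℝ × ℝ => pdp H (q z.1) (p z.1) :=
      (continuous_pdp hC3).comp ((hqc.comp continuous_fst).prodMk (hpc.comp continuous_fst))
    have c2 : Continuous fun z : ℝ × ℝ => pdp H z.2 (p z.1) :=
      (continuous_pdp hC3).comp (continuous_snd.prodMk (hpc.comp continuous_fst))
    have c3 : Continuous fun z : ℝ × ℝ => H z.2 (p z.1) :=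
      (continuous_H hC3).comp (continuous_snd.prodMk (hpc.comp continuous_fst))
    exact ((continuous_const.mul (c1.sub c2).abs).add
      (((hpc.comp continuous_fst).mul c2).sub c3)).add
      (continuous_const.mul ((continuous_fst.sub continuous_const).abs))
  have hA0 : A (t₀, q t₀) = RHS := by
    simp only [hA, hRHS]
    norm_num
  clear_value A RHS
  -- neighbourhoods where A and deriv ψ are controlled
  have hAopen : IsOpen (A ⁻¹' Iio (RHS + η/2)) := isOpen_Iio.preimage hAc
  have hAmem : (t₀, q t₀) ∈ A ⁻¹' Iio (RHS + η/2) := by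
    simp only [mem_preimage, mem_Iio, hA0]; linarith
  obtain ⟨θ₁, hθ₁pos, hθ₁⟩ := Metric.mem_nhds_iff.mp (hAopen.mem_nhds hAmem)
  have hψopen : IsOpen ((deriv ψ) ⁻¹' Ioi (deriv ψ t₀ - η/2)) := isOpen_Ioi.preimage hψ'
  have hψmem : t₀ ∈ (deriv ψ) ⁻¹' Ioi (deriv ψ t₀ - η/2) := by
    simp only [mem_preimage, mem_Ioi]; linarith
  obtain ⟨θ₂, hθ₂pos, hθ₂⟩ := Metric.mem_nhds_iff.mp (hψopen.mem_nhds hψmem)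
  -- radii
  obtain ⟨ρ, hρpos, hρr, hρθ⟩ : ∃ ρ : ℝ, 0 < ρ ∧ ρ ≤ r/2 ∧ ρ ≤ θ₁ :=
    ⟨min (r/2) θ₁, lt_min (by linarith) hθ₁pos, min_le_left _ _, min_le_right _ _⟩
  obtain ⟨δq, hδqpos, hδq⟩ : ∃ δq > 0, ∀ t : ℝ, dist t t₀ < δq → dist (q t) (q t₀) < ρ/2 :=
    Metric.continuousAt_iff.mp hqc.continuousAt (ρ/2) (by linarith)
  obtain ⟨δ, hδpos, hδ1, hδq2, hδt0, hδtT, hδθ2, hδρ⟩ :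
      ∃ δ : ℝ, 0 < δ ∧ δ < δ₁ ∧ δ < δq ∧ δ < t₀ ∧ δ < T - t₀ ∧ δ < θ₂ ∧ δ ≤ ρ/2 := by
    refine ⟨min (min (δ₁/2) (δq/2)) (min (min (t₀/2) ((T - t₀)/2)) (min (θ₂/2) (ρ/2))),
      ?_, ?_, ?_, ?_, ?_, ?_, ?_⟩
    · have h1 := ht₀.1; have h2 := ht₀.2
      exact lt_min (lt_min (by linarith) (by linarith))
        (lt_min (lt_min (by linarith) (by linarith)) (lt_min (by linarith) (by linarith)))
    · calc _ ≤ δ₁/2 := le_trans (min_le_left _ _) (min_le_left _ _)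
        _ < δ₁ := by linarith
    · calc _ ≤ δq/2 := le_trans (min_le_left _ _) (min_le_right _ _)
        _ < δq := by linarith
    · calc _ ≤ t₀/2 := le_trans (min_le_right _ _) (le_trans (min_le_left _ _) (min_le_left _ _))
        _ < t₀ := by linarith [ht₀.1]
    · calc _ ≤ (T - t₀)/2 :=
          le_trans (min_le_right _ _) (le_trans (min_le_left _ _) (min_le_right _ _))
        _ < T - t₀ := by linarith [ht₀.2]
    · calc _ ≤ θ₂/2 := le_trans (min_le_right _ _) (le_trans (min_le_right _ _) (min_le_left _ _))
        _ < θ₂ := by linarith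
    · exact le_trans (min_le_right _ _) (le_trans (min_le_right _ _) (min_le_right _ _))
  obtain ⟨ε, hεpos, hεK, hεK2⟩ :
      ∃ ε : ℝ, 0 < ε ∧ 2*K*ε < ρ/2 ∧ 2*K^2*ε < δ^2 := by
    have hKp1 : 0 < 2*K := by linarith
    have hKp2 : 0 < 2*K^2 := by positivity
    have hb1 : 0 < ρ/2 := by linarith
    have hb2 : 0 < δ^2 := by positivity
    refine ⟨min ((ρ/2)/(2*(2*K))) ((δ^2)/(2*(2*K^2))), lt_min (by positivity) (by positivity),
      ?_, ?_⟩
    · have h1 : 2*K * min ((ρ/2)/(2*(2*K))) ((δ^2)/(2*(2*K^2))) ≤ 2*K * ((ρ/2)/(2*(2*K))) :=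
        mul_le_mul_of_nonneg_left (min_le_left _ _) hKp1.le
      have h2 : 2*K * ((ρ/2)/(2*(2*K))) = (ρ/2)/2 := by field_simp
      rw [h2] at h1
      linarith
    · have h1 : 2*K^2 * min ((ρ/2)/(2*(2*K))) ((δ^2)/(2*(2*K^2))) ≤ 2*K^2 * ((δ^2)/(2*(2*K^2))) :=
        mul_le_mul_of_nonneg_left (min_le_right _ _) hKp2.le
      have h2 : 2*K^2 * ((δ^2)/(2*(2*K^2))) = (δ^2)/2 := by field_simp
      rw [h2] at h1
      linarith
  -- the test function and the compact maximisation
  set φ : ℝ × ℝ → ℝ :=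
    fun z => ψ z.1 + (z.2 - q z.1)^2/(2*ε) + (z.1 - t₀)^2 with hφ
  have hφC1 : ContDiff ℝ 1 φ := by
    apply ContDiff.add
    apply ContDiff.add
    · exact hψ.comp contDiff_fst
    · exact ((contDiff_snd.sub (hqC1.comp contDiff_fst)).pow 2).div_const (2*ε)
    · exact (contDiff_fst.sub contDiff_const).pow 2
  set Kc : Set (ℝ × ℝ) := Icc (t₀ - δ) (t₀ + δ) ×ˢ Icc (q t₀ - ρ) (q t₀ + ρ) with hKc
  have hKcomp : IsCompact Kc := isCompact_Icc.prod isCompact_Icc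
  have hKne : Kc.Nonempty :=
    ⟨(t₀, q t₀), ⟨⟨by linarith, by linarith⟩, ⟨by linarith, by linarith⟩⟩⟩
  obtain ⟨zε, hzmem, hzmax⟩ := hKcomp.exists_isMaxOn hKne
    ((hU.continuous.sub hφC1.continuous).continuousOn (f := fun z => U z - φ z))
  obtain ⟨htε, hxε⟩ := hzmem
  set tε : ℝ := zε.1 with htεdef
  set xε : ℝ := zε.2 with hxεdef
  have htεδ : |tε - t₀| ≤ δ := by
    rw [abs_le]; constructor <;> [linarith [htε.1]; linarith [htε.2]]
  have hqtε : |q tε - q t₀| < ρ/2 := by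
    have := hδq tε (by rw [Real.dist_eq]; exact lt_of_le_of_lt htεδ hδq2)
    rwa [Real.dist_eq] at this
  -- membership of relevant points in the Lipschitz ball
  have hmemball : ∀ w : ℝ × ℝ, |w.1 - t₀| ≤ δ → |w.2 - q t₀| ≤ ρ → w ∈ Metric.ball (t₀, q t₀) r := by
    intro w h1 h2
    rw [Metric.mem_ball, Prod.dist_eq]
    apply max_lt
    · rw [Real.dist_eq]; apply lt_of_le_of_lt h1; linarith
    · rw [Real.dist_eq]; apply lt_of_le_of_lt h2; linarith
  have hzball : zε ∈ Metric.ball (t₀, q t₀) r := by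
    apply hmemball zε htεδ
    rw [abs_le]; constructor <;> [linarith [hxε.1]; linarith [hxε.2]]
  have hqball : ((tε, q tε) : ℝ × ℝ) ∈ Metric.ball (t₀, q t₀) r := by
    apply hmemball (tε, q tε) htεδ
    have := abs_le.mp hqtε.le
    rw [abs_le]; constructor <;> [linarith [this.1]; linarith [this.2]]
  -- the fundamental estimate at the maximum point
  set d : ℝ := xε - q tε with hd
  have hUd : U zε - U (tε, q tε) ≤ K * |d| := by
    have := hUlip zε (tε, q tε) hzball hqball
    have hdist : dist zε ((tε, q tε) : ℝ × ℝ) = |d| := by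
      rw [Prod.dist_eq]
      simp [Real.dist_eq, hd]
      show max |tε - tε| |xε - q tε| = |xε - q tε|
      simp
    rwa [hdist] at this
  have hmaxat : U (t₀, q t₀) - φ (t₀, q t₀) ≤ U zε - φ zε := by
    apply hzmax
    exact ⟨⟨by linarith, by linarith⟩, ⟨by linarith, by linarith⟩⟩
  have hφ0 : φ (t₀, q t₀) = ψ t₀ := by simp [hφ]
  have hφz : φ zε = ψ tε + d^2/(2*ε) + (tε - t₀)^2 := by simp [hφ, hd]; rfl
  have hloc : U (tε, q tε) - ψ tε ≤ U (t₀, q t₀) - ψ t₀ :=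
    hδ₁ (show dist tε t₀ < δ₁ by rw [Real.dist_eq]; exact lt_of_le_of_lt htεδ hδ1)
  have hfund : d^2/(2*ε) + (tε - t₀)^2 ≤ K * |d| := by
    have h1 : U (t₀, q t₀) - ψ t₀ ≤ U zε - (ψ tε + d^2/(2*ε) + (tε - t₀)^2) := by
      rw [← hφ0, ← hφz]; exact hmaxat
    have h2 : U zε ≤ U (tε, q tε) + K * |d| := by linarith [hUd]
    linarith [hloc, h1, h2]
  have hdle : |d| ≤ 2*K*ε := by
    rcases eq_or_ne d 0 with h | h
    · rw [h]; simpa using (by positivity : (0:ℝ) ≤ 2*K*ε)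
    · have habs : 0 < |d| := abs_pos.mpr h
      have h1 : |d|^2/(2*ε) ≤ K * |d| := by
        rw [← sq_abs] at hfund
        nlinarith [sq_nonneg (tε - t₀)]
      rw [div_le_iff₀ (by positivity)] at h1
      nlinarith [habs]
  have htεsq : (tε - t₀)^2 ≤ 2*K^2*ε := by
    have h1 : K * |d| ≤ 2*K^2*ε := by
      have := mul_le_mul_of_nonneg_left hdle hKpos.le
      nlinarith [this]
    linarith [hfund, div_nonneg (sq_nonneg d) (by positivity : (0:ℝ) ≤ 2*ε)]
  have htεlt : |tε - t₀| < δ := by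
    by_contra hcon
    push_neg at hcon
    have : δ^2 ≤ |tε - t₀|^2 := by nlinarith [hδpos]
    rw [sq_abs] at this
    linarith [htεsq, hεK2]
  have hxεlt : |xε - q t₀| < ρ := by
    have h1 : |xε - q t₀| ≤ |d| + |q tε - q t₀| := by
      rw [hd]
      calc |xε - q t₀| = |(xε - q tε) + (q tε - q t₀)| := by ring_nf
        _ ≤ |xε - q tε| + |q tε - q t₀| := abs_add_le _ _
    linarith [hdle, hqtε, hεK]
  -- interior maximum, apply the viscosity inequality
  have hKcnhds : Kc ∈ nhds zε := by
    rw [hKc]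
    apply prod_mem_nhds
    · apply Icc_mem_nhds
      · linarith [(abs_lt.mp htεlt).1]
      · linarith [(abs_lt.mp htεlt).2]
    · apply Icc_mem_nhds
      · linarith [(abs_lt.mp hxεlt).1]
      · linarith [(abs_lt.mp hxεlt).2]
  have hlocmax : IsLocalMax (fun z => U z - φ z) (tε, xε) := by
    have : ((tε, xε) : ℝ × ℝ) = zε := rfl
    rw [this]
    exact hzmax.isLocalMax hKcnhds
  have htεIoo : tε ∈ Ioo (0:ℝ) T := by
    constructor
    · linarith [(abs_lt.mp htεlt).1, hδt0]
    · linarith [(abs_lt.mp htεlt).2, hδtT]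
  have hvisc := hsub φ hφC1 tε xε htεIoo hlocmax
  -- compute the two partial derivatives of φ
  have hdx : deriv (fun x => φ (tε, x)) xε = d/ε := by
    have h1 : HasDerivAt (fun x : ℝ => ψ tε + (x - q tε)^2/(2*ε) + (tε - t₀)^2) (d/ε) xε := by
      have h2 := (((hasDerivAt_id xε).sub_const (q tε)).fun_pow 2).div_const (2*ε)
      have h3 := (h2.const_add (ψ tε)).add_const ((tε - t₀)^2)
      refine h3.congr_deriv ?_
      rw [div_eq_div_iff (by positivity) hεpos.ne', show (2:ℕ) - 1 = 1 from rfl, hd]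
      simp only [id_eq]
      push_cast
      ring
    exact h1.deriv
  have hdt : deriv (fun t => φ (t, xε)) tε
      = deriv ψ tε - (d/ε) * pdp H (q tε) (p tε) + 2*(tε - t₀) := by
    have hψd : HasDerivAt ψ (deriv ψ tε) tε :=
      ((hψ.differentiable one_ne_zero) tε).hasDerivAt
    have h2 : HasDerivAt (fun t : ℝ => (xε - q t)^2/(2*ε))
        ((2 * (xε - q tε)^1 * (0 - pdp H (q tε) (p tε)))/(2*ε)) tε :=
      (((hasDerivAt_const tε xε).sub (hq tε)).fun_pow 2).div_const (2*ε)
    have h3 : HasDerivAt (fun t : ℝ => (t - t₀)^2) (2*(tε - t₀)) tε := by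
      have := ((hasDerivAt_id tε).sub_const t₀).fun_pow 2
      simpa using this
    have h4 := (hψd.add h2).add h3
    have h5 : deriv ψ tε + (2 * (xε - q tε)^1 * (0 - pdp H (q tε) (p tε)))/(2*ε) + 2*(tε - t₀)
        = deriv ψ tε - (d/ε) * pdp H (q tε) (p tε) + 2*(tε - t₀) := by
      field_simp [hd]
      ring
    rw [← h5]
    exact h4.deriv
  rw [hdt, hdx] at hvisc
  -- convexity estimate and conclusion
  set rr : ℝ := d/ε with hrr
  have hrrle : |rr| ≤ 2*K := by
    rw [hrr, abs_div, abs_of_pos hεpos, div_le_iff₀ hεpos]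
    calc |d| ≤ 2*K*ε := hdle
      _ = 2*K*ε := rfl
  have htan := tangent_le hC3 hCVX xε (p tε) rr
  have hstep : deriv ψ tε ≤ rr * (pdp H (q tε) (p tε) - pdp H xε (p tε))
      + (p tε * pdp H xε (p tε) - H xε (p tε)) + 2*(t₀ - tε) := by
    nlinarith [hvisc, htan]
  have hstep2 : deriv ψ tε ≤ A (tε, xε) := by
    have hb1 : rr * (pdp H (q tε) (p tε) - pdp H xε (p tε))
        ≤ 2*K*|pdp H (q tε) (p tε) - pdp H xε (p tε)| := by
      calc rr * (pdp H (q tε) (p tε) - pdp H xε (p tε))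
          ≤ |rr * (pdp H (q tε) (p tε) - pdp H xε (p tε))| := le_abs_self _
        _ = |rr| * |pdp H (q tε) (p tε) - pdp H xε (p tε)| := abs_mul _ _
        _ ≤ 2*K*|pdp H (q tε) (p tε) - pdp H xε (p tε)| :=
            mul_le_mul_of_nonneg_right hrrle (abs_nonneg _)
    have hb2 : 2*(t₀ - tε) ≤ 2*|tε - t₀| := by
      rw [abs_sub_comm]
      have := le_abs_self (t₀ - tε)
      linarith
    simp only [hA]
    linarith [hstep, hb1, hb2]
  -- pass to the limit point within the chosen neighbourhoods
  have hAless : A (tε, xε) < RHS + η/2 := by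
    have : ((tε, xε) : ℝ × ℝ) ∈ Metric.ball ((t₀, q t₀) : ℝ × ℝ) θ₁ := by
      rw [Metric.mem_ball, Prod.dist_eq]
      apply max_lt
      · rw [Real.dist_eq]
        calc |tε - t₀| < δ := htεlt
          _ ≤ ρ/2 := hδρ
          _ < θ₁ := by linarith [hρθ, hρpos]
      · rw [Real.dist_eq]
        exact lt_of_lt_of_le hxεlt hρθ
    exact hθ₁ this
  have hψless : deriv ψ t₀ - η/2 < deriv ψ tε := by
    have : tε ∈ Metric.ball t₀ θ₂ := by
      rw [Metric.mem_ball, Real.dist_eq]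
      exact lt_trans htεlt hδθ2
    exact hθ₂ this
  linarith [hstep2, hAless, hψless]

end Stmt8

/-- Lemma: every initial datum in the inverse design `I_T^{HJ}(W)` dominates `U₀*`. -/
theorem stmt_8 (H : ℝ → ℝ → ℝ) (hC3 : CondC3 H) (hCNH : CondCNH H) (hCVX : CondCVX H)
    (T : ℝ) (hT : 0 < T) (W : ℝ → ℝ) (hW : LocallyLipschitz W) :
    ∀ U₀ ∈ InvDesignHJ H T W, ∀ x : ℝ, UStar H T W x ≤ U₀ x := by
  intro U₀ hU₀ x
  obtain ⟨hU₀lip, U, hUlip, hvisc, hU0, hUT⟩ := hU₀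
  obtain ⟨X, hX, hX0⟩ := hCNH
  have hub : ∀ y ∈ {y : ℝ | ∃ q p : ℝ → ℝ, SolvesHS H q p ∧ q 0 = x ∧
      y = W (q T) - rayCost H T q}, y ≤ U₀ x := by
    rintro y ⟨q, p, hqp, hq0, rfl⟩
    have hq : ∀ t, HasDerivAt q (pdp H (q t) (p t)) t := fun t => (hqp t).1
    have hp : ∀ t, HasDerivAt p (-(pdx H (q t) (p t))) t := fun t => (hqp t).2
    have hqc : Continuous q := by
      rw [continuous_iff_continuousAt]; exact fun t => (hq t).continuousAt
    have hpc : Continuous p := by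
      rw [continuous_iff_continuousAt]; exact fun t => (hp t).continuousAt
    have hfc : Continuous (fun t => p t * pdp H (q t) (p t) - H (q t) (p t)) :=
      (hpc.mul ((Stmt8.continuous_pdp hC3).comp (hqc.prodMk hpc))).sub
        ((Stmt8.continuous_H hC3).comp (hqc.prodMk hpc))
    have hvc : Continuous (fun t => U (t, q t)) :=
      hUlip.continuous.comp (continuous_id.prodMk hqc)
    have hmono := Stmt8.visc_mono hT hvc hfc
      (fun t₀ ht₀ ψ hψ hmax => Stmt8.key_P hC3 hCVX hUlip hvisc.1 hq hp t₀ ht₀ ψ hψ hmax)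
    have hcost : rayCost H T q = ∫ s in (0:ℝ)..T, (p s * pdp H (q s) (p s) - H (q s) (p s)) := by
      apply intervalIntegral.integral_congr
      intro s _
      have hds : deriv q s = pdp H (q s) (p s) := (hq s).deriv
      show Leg H (q s) (deriv q s) = _
      rw [hds]
      exact Stmt8.Leg_eval hC3 hCVX (q s) (p s)
    have hW1 : W (q T) = U (T, q T) := (hUT (q T)).symm
    have hW0 : U (0, q 0) = U₀ x := by rw [hq0]; exact hU0 x
    rw [hcost, hW1]
    have : U (T, q T) - U (0, q 0) ≤
        ∫ s in (0:ℝ)..T, (p s * pdp H (q s) (p s) - H (q s) (p s)) := hmono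
    linarith [this, hW0.le, hW0.ge]
  obtain ⟨q, p, hqp, hq0⟩ := Stmt8.exists_ray X hX hX0 hC3 hCVX x
  have hne : {y : ℝ | ∃ q p : ℝ → ℝ, SolvesHS H q p ∧ q 0 = x ∧
      y = W (q T) - rayCost H T q}.Nonempty :=
    ⟨W (q T) - rayCost H T q, q, p, hqp, hq0, rfl⟩
  exact csSup_le hne hub
end
end
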